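/- arXiv:2301.02104 — 2 statements merged into one kernel-verified Lean document; each statement's English description precedes it below -/
import Mathlib

section
/- Transition probability after a change at odd gap: for the stationary simple random walk on G_K started at a with N blocks of lengths M_1,...,M_N, and for 2 ≤ n ≤ N, P(ε_n = 1 | ε_{n-1} = 0, ..., ε_{n-(2k-2)} = 0, ε_{n-(2k-1)} = 1, Y(0) = a) = M_n · x_n^N, where x_n^N = [M_n; M_{n+1},...,M_N,1] (with the convention x_{N+1}^N = 1, and in particular when n = N this equals M_N/(M_N+1)). -/
open MeasureTheory ProbabilityTheory Finset

noncomputable section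

/-- The sample space of the coupled construction: `ε`, `(α_k)`, `(β_k)`. -/
abbrev Omega (K : ℕ) := Bool × (Fin K → Fin 3) × (Fin K → Bool)

/-- The uniform probability measure on `Omega K`; its coordinates are independent,
`ε` is uniform on `{-1,1}` (via `Bool`), each `α_k` is Bernoulli(1/3)
(`α_k = 1` iff the `Fin 3` coordinate equals `0`), each `β_k` uniform on `{-1,1}`. -/
def unif (K : ℕ) : Measure (Omega K) := (PMF.uniformOfFintype (Omega K)).toMeasure

def sgn (b : Bool) : ℤ := if b then 1 else -1

def epsRV {K : ℕ} (ω : Omega K) : ℤ := sgn ω.1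

def alphaRV {K : ℕ} (k : Fin K) (ω : Omega K) : ℤ := if ω.2.1 k = 0 then 1 else 0

def alphaN {K : ℕ} (k : Fin K) (ω : Omega K) : ℕ := if ω.2.1 k = 0 then 1 else 0

def betaRV {K : ℕ} (k : Fin K) (ω : Omega K) : ℤ := sgn (ω.2.2 k)

/-- `γ_{j+1} = ε · (-1)^{α_1 + ⋯ + α_j}` (0-indexed: `gammaRV j` is the paper's `γ_{j+1}`). -/
def gammaRV {K : ℕ} (j : ℕ) (ω : Omega K) : ℤ :=
  epsRV ω * (-1) ^ (∑ k ∈ Finset.univ.filter (fun k : Fin K => (k : ℕ) < j), alphaN k ω)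

/-- `A_k = (1-α_k)β_k + α_k γ_k`. -/
def ARV {K : ℕ} (k : Fin K) (ω : Omega K) : ℤ :=
  (1 - alphaRV k ω) * betaRV k ω + alphaRV k ω * gammaRV (k : ℕ) ω

/-- `B_k = (1-α_k)β_k - α_k γ_k`. -/
def BRV {K : ℕ} (k : Fin K) (ω : Omega K) : ℤ :=
  (1 - alphaRV k ω) * betaRV k ω - alphaRV k ω * gammaRV (k : ℕ) ω

/-- The nonzero coordinates of `v - u` have alternating signs: whenever `i < j` are
two "changed" coordinates with no changed coordinate strictly between them,
the changes have opposite signs. -/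
def AltSigns {K : ℕ} (u v : Fin K → ℤ) : Prop :=
  ∀ i j : Fin K, i < j → u i ≠ v i → u j ≠ v j →
    (∀ l : Fin K, i < l → l < j → u l = v l) → v i - u i = -(v j - u j)

/-- The first nonzero coordinate of `v - u` is negative if `s = true` (positive edges `E⁺`),
positive if `s = false` (negative edges `E⁻`). -/
def FirstSign {K : ℕ} (s : Bool) (u v : Fin K → ℤ) : Prop :=
  ∀ i : Fin K, u i ≠ v i → (∀ l : Fin K, l < i → u l = v l) →
    (if s then v i - u i < 0 else 0 < v i - u i)

/-- `(u,v)` is an edge of sign `s` of the multigraph `G_K`: either a loop (each vertex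
carries one loop of each sign), or `u ≠ v` with alternating signs starting as dictated by `s`. -/
def IsEdge {K : ℕ} (s : Bool) (u v : Fin K → ℤ) : Prop :=
  u = v ∨ (u ≠ v ∧ AltSigns u v ∧ FirstSign s u v)

/-- Interpret a Boolean vector as a vertex of `V_K = {-1,1}^K`. -/
def toPM {K : ℕ} (b : Fin K → Bool) : Fin K → ℤ := fun k => if b k then 1 else -1

/-- Partial sums `S_m = M_1 + ⋯ + M_m` of the block lengths. -/
def Ssum (M : ℕ → ℕ) (m : ℕ) : ℕ := ∑ k ∈ Finset.range m, M k

/-- 0-indexed block index of position `k` (positions `Ssum M j ≤ k < Ssum M (j+1)`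
belong to block `j`). -/
def blk (M : ℕ → ℕ) (N : ℕ) (k : ℕ) : ℕ :=
  ((Finset.range N).filter (fun m => Ssum M (m + 1) ≤ k)).card

/-- The vertex `a ∈ {-1,1}^K` whose maximal constancy blocks have lengths
`M_1, …, M_N` and whose first digit is `1` (so block `j` carries the value `(-1)^j`,
0-indexed). -/
def avert (M : ℕ → ℕ) (N : ℕ) {K : ℕ} : Fin K → ℤ :=
  fun k => if blk M N (k : ℕ) % 2 = 0 then 1 else -1

/-- Finite continued fraction: `cf [a₁, …, aₙ] = 1/(a₁ + 1/(a₂ + ⋯ + 1/(aₙ + 1)))`,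
with `cf [] = 1`. -/
noncomputable def cf : List ℝ → ℝ
  | [] => 1
  | a :: l => 1 / (a + cf l)

/-- `x_j^N = [M_j; M_{j+1}, …, M_{N-1}, 1]` (0-indexed blocks `j, …, N-1`);
for `j = N` this is the convention `x_{N+1}^N = 1`. -/
noncomputable def xcf (M : ℕ → ℕ) (N j : ℕ) : ℝ :=
  cf ((List.range (N - j)).map fun i => (M (j + i) : ℝ))

/-- `ε_j = 1`: the step of the walk changes a digit in the `j`-th (0-indexed)
constancy block, i.e. `B` differs from `A` at some position of block `j`. -/
def epsChange {K : ℕ} (M : ℕ → ℕ) (N : ℕ) (j : ℕ) (ω : Omega K) : Prop :=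
  ∃ k : Fin K, blk M N (k : ℕ) = j ∧ BRV k ω ≠ ARV k ω


section Aux
open Finset

lemma Ssum_mono (M : ℕ → ℕ) : Monotone (Ssum M) := fun _ _ h =>
  Finset.sum_le_sum_of_subset (Finset.range_subset_range.2 h)

lemma Ssum_succ (M : ℕ → ℕ) (m : ℕ) : Ssum M (m+1) = Ssum M m + M m :=
  Finset.sum_range_succ _ _

lemma filter_range_dc {N : ℕ} (p : ℕ → Prop) [DecidablePred p]
    (dc : ∀ m m', m ≤ m' → p m' → p m) :
    (Finset.range N).filter p = Finset.range (((Finset.range N).filter p).card) := by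
  ext m
  simp only [Finset.mem_filter, Finset.mem_range]
  constructor
  · rintro ⟨hm, hp⟩
    have hsub : Finset.range (m+1) ⊆ (Finset.range N).filter p := by
      intro l hl
      simp only [Finset.mem_range, Nat.lt_succ_iff] at hl
      simp only [Finset.mem_filter, Finset.mem_range]
      exact ⟨lt_of_le_of_lt hl hm, dc l m hl hp⟩
    have := Finset.card_le_card hsub
    simpa using this
  · intro hm
    by_contra hnot
    have hsub : (Finset.range N).filter p ⊆ Finset.range m := by
      intro l hl
      simp only [Finset.mem_filter, Finset.mem_range] at hl
      simp only [Finset.mem_range]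
      by_contra hlm
      push_neg at hlm
      exact hnot ⟨lt_of_le_of_lt hlm hl.1, dc m l hlm hl.2⟩
    have := Finset.card_le_card hsub
    simp only [Finset.card_range] at this
    omega

lemma blk_filter (M : ℕ → ℕ) (N k : ℕ) :
    (Finset.range N).filter (fun m => Ssum M (m + 1) ≤ k) = Finset.range (blk M N k) := by
  apply filter_range_dc
  intro m m' h hp
  exact le_trans (Ssum_mono M (by omega)) hp

lemma lt_blk_iff (M : ℕ → ℕ) (N k m : ℕ) :
    m < blk M N k ↔ m < N ∧ Ssum M (m+1) ≤ k := by
  rw [← Finset.mem_range (n := blk M N k), ← blk_filter]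
  simp

lemma blk_lt (M : ℕ → ℕ) (N k : ℕ) (hk : k < Ssum M N) : blk M N k < N := by
  by_contra h
  push_neg at h
  rcases Nat.lt_or_ge N (blk M N k) with h' | h'
  · have := (lt_blk_iff M N k N).1 h'
    omega
  · have hN : N = blk M N k := le_antisymm h h'
    rcases Nat.eq_zero_or_pos N with h0 | h0
    · simp [Ssum, h0] at hk
    · have h2 := ((lt_blk_iff M N k (N-1)).1 (by omega)).2
      have h3 : N - 1 + 1 = N := by omega
      rw [h3] at h2
      omega

lemma Ssum_blk_le (M : ℕ → ℕ) (N k : ℕ) : Ssum M (blk M N k) ≤ k := by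
  rcases Nat.eq_zero_or_pos (blk M N k) with h | h
  · simp [h, Ssum]
  · have h2 := ((lt_blk_iff M N k (blk M N k - 1)).1 (by omega)).2
    have h3 : blk M N k - 1 + 1 = blk M N k := by omega
    rwa [h3] at h2

lemma lt_Ssum_blk (M : ℕ → ℕ) (N k : ℕ) (hk : k < Ssum M N) : k < Ssum M (blk M N k + 1) := by
  by_contra h
  push_neg at h
  have := (lt_blk_iff M N k (blk M N k)).2 ⟨blk_lt M N k hk, h⟩
  omega

lemma blk_eq_of (M : ℕ → ℕ) (N k t : ℕ) (ht : t < N) (h1 : Ssum M t ≤ k) (h2 : k < Ssum M (t+1)) :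
    blk M N k = t := by
  have hle : blk M N k ≤ t := by
    by_contra h
    push_neg at h
    have := (lt_blk_iff M N k t).1 h
    omega
  have hge : t ≤ blk M N k := by
    by_contra h
    push_neg at h
    rcases Nat.eq_zero_or_pos t with h0 | h0
    · omega
    · have hb : t - 1 < blk M N k := by
        apply (lt_blk_iff M N k (t-1)).2
        refine ⟨by omega, ?_⟩
        have h4 : t - 1 + 1 = t := by omega
        rw [h4]; exact h1
      omega
  omega

lemma blk_mono (M : ℕ → ℕ) (N : ℕ) {k l : ℕ} (h : k ≤ l) : blk M N k ≤ blk M N l := by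
  apply Finset.card_le_card
  intro m hm
  simp only [Finset.mem_filter] at hm ⊢
  exact ⟨hm.1, le_trans hm.2 h⟩

lemma lt_of_blk_lt (M : ℕ → ℕ) (N : ℕ) {k l : ℕ} (h : blk M N k < blk M N l) : k < l := by
  by_contra h'
  push_neg at h'
  exact absurd (blk_mono M N h') (by omega)

lemma avert_eq_pow (M : ℕ → ℕ) (N : ℕ) {K : ℕ} (k : Fin K) :
    avert M N k = (-1 : ℤ) ^ (blk M N (k : ℕ)) := by
  unfold avert
  rcases Nat.even_or_odd (blk M N (k : ℕ)) with h | h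
  · rw [if_pos (Nat.even_iff.1 h), Even.neg_one_pow h]
  · rw [if_neg (by rw [Nat.odd_iff.1 h]; omega), Odd.neg_one_pow h]

lemma neg_one_pow_eq_iff (m n : ℕ) : ((-1 : ℤ)^m = (-1)^n) ↔ m % 2 = n % 2 := by
  rcases Nat.even_or_odd m with hm | hm <;> rcases Nat.even_or_odd n with hn | hn <;>
    simp [Even.neg_one_pow, Odd.neg_one_pow, Nat.even_iff.1, Nat.odd_iff.1, *] <;> omega

end Aux

section Alt
open Finset
open scoped Classical

/-- `T` is an admissible change-pattern for start sign `e`: reading the elements of `T`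
in increasing order, the corresponding digits of `avert M N` are `e, -e, e, …`. -/
def altA (M : ℕ → ℕ) (N : ℕ) {K : ℕ} (T : Finset (Fin K)) (e : ℤ) : Prop :=
  ∀ k ∈ T, avert M N k = e * (-1) ^ ((T.filter (fun l => l < k)).card)

lemma altA_e_ne_zero {M N} {K : ℕ} {T : Finset (Fin K)} {e : ℤ}
    (h : altA M N T e) {k : Fin K} (hk : k ∈ T) : e ≠ 0 := by
  intro h0
  have := h k hk
  rw [h0, zero_mul] at this
  unfold avert at this
  split_ifs at this <;> omega

lemma altA_parity {M N} {K : ℕ} {T : Finset (Fin K)} {e : ℤ}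
    (h : altA M N T e) {k : Fin K} (hk : k ∈ T) :
    ((-1 : ℤ)) ^ (blk M N (k : ℕ)) = e * (-1) ^ ((T.filter (fun l => l < k)).card) := by
  rw [← avert_eq_pow]; exact h k hk

lemma altA_one_per_block {M N} {K : ℕ} {T : Finset (Fin K)} {e : ℤ}
    (h : altA M N T e) :
    ∀ k ∈ T, ∀ l ∈ T, blk M N (k : ℕ) = blk M N (l : ℕ) → k = l := by
  suffices H : ∀ d : ℕ, ∀ k ∈ T, ∀ l ∈ T, (l:ℕ) - (k:ℕ) = d → k < l →
      blk M N (k:ℕ) = blk M N (l:ℕ) → False by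
    intro k hk l hl hb
    rcases lt_trichotomy k l with h'|h'|h'
    · exact absurd hb (fun hb => H _ k hk l hl rfl h' hb)
    · exact h'
    · exact absurd hb.symm (fun hb => H _ l hl k hk rfl h' hb)
  intro d
  induction d using Nat.strong_induction_on with
  | _ d ih =>
    intro k hk l hl hd hkl hb
    have he := altA_e_ne_zero h hk
    have hak := h k hk
    have hal := h l hl
    have hav : avert M N k = avert M N l := by
      rw [avert_eq_pow, avert_eq_pow, hb]
    set m := ((T.filter (fun x => x < k)).card) with hm
    set n := ((T.filter (fun x => x < l)).card) with hn
    have hpow : ((-1:ℤ))^m = (-1)^n :=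
      mul_left_cancel₀ he (by rw [← hak, ← hal, hav])
    have hmod : m % 2 = n % 2 := (neg_one_pow_eq_iff m n).1 hpow
    have hsub : insert k (T.filter (fun x => x < k)) ⊆ T.filter (fun x => x < l) := by
      intro x hx
      rcases Finset.mem_insert.1 hx with rfl | hx
      · exact Finset.mem_filter.2 ⟨hk, hkl⟩
      · rcases Finset.mem_filter.1 hx with ⟨hx1, hx2⟩
        exact Finset.mem_filter.2 ⟨hx1, lt_trans hx2 hkl⟩
    have hknot : k ∉ T.filter (fun x => x < k) := by
      intro hx
      exact absurd (Finset.mem_filter.1 hx).2 (lt_irrefl k)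
    have hcard : m + 1 ≤ n := by
      have := Finset.card_le_card hsub
      rwa [Finset.card_insert_of_notMem hknot] at this
    have hcard2 : m + 1 < n := by omega
    have hlt : (insert k (T.filter (fun x => x < k))).card < (T.filter (fun x => x < l)).card := by
      rw [Finset.card_insert_of_notMem hknot]; omega
    have hns : ¬ (T.filter (fun x => x < l)) ⊆ insert k (T.filter (fun x => x < k)) :=
      fun hsub => absurd (Finset.card_le_card hsub) (by omega)
    obtain ⟨l', hl'mem, hl'not⟩ := Finset.not_subset.1 hns
    rcases Finset.mem_filter.1 hl'mem with ⟨hl'T, hl'l⟩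
    have hkl' : k < l' := by
      rcases lt_trichotomy k l' with h'|h'|h'
      · exact h'
      · subst h'; exact absurd (Finset.mem_insert_self _ _) hl'not
      · have hmem : l' ∈ T.filter (fun x => x < k) := Finset.mem_filter.2 ⟨hl'T, h'⟩
        exact absurd (Finset.mem_insert_of_mem hmem) hl'not
    have hbl' : blk M N (l' : ℕ) = blk M N (l : ℕ) := by
      have h1 : blk M N (k:ℕ) ≤ blk M N (l':ℕ) := blk_mono M N (le_of_lt hkl')
      have h2 : blk M N (l':ℕ) ≤ blk M N (l:ℕ) := blk_mono M N (le_of_lt hl'l)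
      omega
    have hfin : (l:ℕ) - (l':ℕ) < d := by
      have : (k:ℕ) < (l':ℕ) := hkl'
      have : (l':ℕ) < (l:ℕ) := hl'l
      omega
    exact ih _ hfin l' hl'T l hl (rfl) hl'l hbl'

end Alt

section Cset
open Finset
open scoped Classical

/-- Admissible patterns supported on blocks `≥ t`, with start sign `e`. -/
noncomputable def csetF (M : ℕ → ℕ) (N K t : ℕ) (e : ℤ) : Finset (Finset (Fin K)) :=
  Finset.univ.filter (fun T => altA M N T e ∧ ∀ k ∈ T, t ≤ blk M N (k : ℕ))

noncomputable def ccount (M : ℕ → ℕ) (N K t : ℕ) : ℕ := (csetF M N K t ((-1)^t)).card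

/-- positions of block `t` inside a pattern -/
noncomputable def pickT (M : ℕ → ℕ) (N t : ℕ) {K : ℕ} (T : Finset (Fin K)) : Finset (Fin K) :=
  T.filter (fun k : Fin K => blk M N (k : ℕ) = t)

lemma mem_csetF {M : ℕ → ℕ} {N K t : ℕ} {e : ℤ} {T : Finset (Fin K)} :
    T ∈ csetF M N K t e ↔ altA M N T e ∧ ∀ k ∈ T, t ≤ blk M N (k : ℕ) := by
  simp [csetF]

lemma empty_mem_csetF (M : ℕ → ℕ) (N K t : ℕ) (e : ℤ) : ∅ ∈ csetF M N K t e := by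
  simp [mem_csetF, altA]

lemma ccount_pos (M : ℕ → ℕ) (N K t : ℕ) : 0 < ccount M N K t :=
  Finset.card_pos.2 ⟨∅, empty_mem_csetF M N K t _⟩

lemma blk_lt_N {M : ℕ → ℕ} {N K : ℕ} (hK : Ssum M N = K) (k : Fin K) :
    blk M N (k : ℕ) < N :=
  blk_lt M N _ (by rw [hK]; exact k.isLt)

lemma csetF_of_ge {M : ℕ → ℕ} {N K t : ℕ} (hK : Ssum M N = K) (ht : N ≤ t) (e : ℤ) :
    csetF M N K t e = {∅} := by
  ext T
  simp only [mem_csetF, Finset.mem_singleton]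
  constructor
  · rintro ⟨-, hge⟩
    by_contra hne
    obtain ⟨k, hk⟩ := Finset.nonempty_iff_ne_empty.2 hne
    have := hge k hk
    have := blk_lt_N hK k
    omega
  · rintro rfl
    exact ⟨fun k hk => absurd hk (Finset.notMem_empty k),
      fun k hk => absurd hk (Finset.notMem_empty k)⟩

lemma ccount_of_ge {M : ℕ → ℕ} {N K t : ℕ} (hK : Ssum M N = K) (ht : N ≤ t) :
    ccount M N K t = 1 := by
  unfold ccount
  rw [csetF_of_ge hK ht]
  simp

lemma min'_eq_of_eq_singleton {α} [LinearOrder α] {s : Finset α} {a : α} (h : s = {a}) :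
    ∀ (hs : s.Nonempty), s.min' hs = a := by
  subst h
  intro hs
  exact Finset.min'_singleton a

lemma card_block {M : ℕ → ℕ} {N K t : ℕ} (hK : Ssum M N = K) (ht : t < N) :
    (Finset.univ.filter (fun k : Fin K => blk M N (k : ℕ) = t)).card = M t := by
  have h1 : Ssum M (t+1) ≤ K := by rw [← hK]; exact Ssum_mono M (by omega)
  have h2 : (Finset.Ico (Ssum M t) (Ssum M (t+1))).card = M t := by
    rw [Nat.card_Ico, Ssum_succ]; omega
  rw [← h2]
  refine Finset.card_bij' (fun (k : Fin K) _ => (k : ℕ))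
    (fun n hn => (⟨n, lt_of_lt_of_le (Finset.mem_Ico.1 hn).2 h1⟩ : Fin K)) ?_ ?_ ?_ ?_
  · intro k hk
    simp only [Finset.mem_filter, Finset.mem_univ, true_and] at hk
    rw [Finset.mem_Ico]
    constructor
    · have h3 := Ssum_blk_le M N (k : ℕ)
      rwa [hk] at h3
    · have h3 := lt_Ssum_blk M N (k : ℕ) (by rw [hK]; exact k.isLt)
      rwa [hk] at h3
  · intro n hn
    simp only [Finset.mem_filter, Finset.mem_univ, true_and]
    rcases Finset.mem_Ico.1 hn with ⟨ha, hb⟩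
    exact blk_eq_of M N n t ht ha hb
  · intro k hk
    exact Fin.ext rfl
  · intro n hn
    rfl

lemma pow_neg_one_shift (t c : ℕ) (hc : 1 ≤ c) :
    ((-1 : ℤ))^t * (-1)^c = (-1)^(t+1) * (-1)^(c-1) := by
  obtain ⟨d, rfl⟩ : ∃ d, c = d + 1 := ⟨c - 1, by omega⟩
  simp only [Nat.add_sub_cancel, pow_succ]
  ring

lemma card_hit {M : ℕ → ℕ} {N K t : ℕ} (hK : Ssum M N = K) (ht : t < N) :
    ((csetF M N K t ((-1)^t)).filter
        (fun T => ∃ k : Fin K, k ∈ T ∧ blk M N (k : ℕ) = t)).card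
      = M t * ccount M N K (t+1) := by
  have htc : ((Finset.univ.filter (fun k : Fin K => blk M N (k : ℕ) = t)) ×ˢ
      csetF M N K (t+1) ((-1)^(t+1))).card = M t * ccount M N K (t+1) := by
    rw [Finset.card_product, card_block hK ht]; rfl
  rw [← htc]
  have hne : ∀ T ∈ (csetF M N K t ((-1)^t)).filter
      (fun T => ∃ k : Fin K, k ∈ T ∧ blk M N (k : ℕ) = t), (pickT M N t T).Nonempty := by
    intro T hT
    rcases Finset.mem_filter.1 hT with ⟨-, k, hk, hbk⟩
    
    exact ⟨k, Finset.mem_filter.2 ⟨hk, hbk⟩⟩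
  refine Finset.card_bij' (fun T hT =>
      ((pickT M N t T).min' (hne T hT), T.erase ((pickT M N t T).min' (hne T hT))))
    (fun p _ => insert p.1 p.2) ?_ ?_ ?_ ?_
  · -- i maps into the product
    intro T hT
    have hk0mem : (pickT M N t T).min' (hne T hT) ∈ pickT M N t T := Finset.min'_mem _ _
    set k0 := (pickT M N t T).min' (hne T hT) with hk0def
    rcases Finset.mem_filter.1 hk0mem with ⟨hk0T, hk0b⟩
    rcases Finset.mem_filter.1 hT with ⟨hTc, -⟩
    rcases mem_csetF.1 hTc with ⟨halt, hge⟩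
    have hother : ∀ k ∈ T, k ≠ k0 → k0 < k ∧ t + 1 ≤ blk M N (k : ℕ) := by
      intro k hk hkne
      have hbk : blk M N (k : ℕ) ≠ t := by
        intro hbk
        exact hkne (altA_one_per_block halt k hk k0 hk0T (by rw [hbk, hk0b]))
      have hgt : t + 1 ≤ blk M N (k : ℕ) := by
        have := hge k hk; omega
      refine ⟨lt_of_blk_lt M N ?_, hgt⟩
      omega
    simp only [Finset.mem_product, Finset.mem_filter, Finset.mem_univ, true_and]
    refine ⟨hk0b, mem_csetF.2 ⟨?_, ?_⟩⟩
    · intro k hk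
      rcases Finset.mem_erase.1 hk with ⟨hkne, hkT⟩
      obtain ⟨hk0lt, hbge⟩ := hother k hkT hkne
      have hfe : (T.erase k0).filter (fun l => l < k)
          = (T.filter (fun l => l < k)).erase k0 := by
        ext x
        simp only [Finset.mem_filter, Finset.mem_erase]
        tauto
      have hk0f : k0 ∈ T.filter (fun l => l < k) := Finset.mem_filter.2 ⟨hk0T, hk0lt⟩
      have hcard : ((T.erase k0).filter (fun l => l < k)).card
          = (T.filter (fun l => l < k)).card - 1 := by
        rw [hfe, Finset.card_erase_of_mem hk0f]
      have hc1 : 1 ≤ (T.filter (fun l => l < k)).card := Finset.card_pos.2 ⟨k0, hk0f⟩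
      rw [hcard, ← pow_neg_one_shift t _ hc1]
      exact halt k hkT
    · intro k hk
      rcases Finset.mem_erase.1 hk with ⟨hkne, hkT⟩
      exact (hother k hkT hkne).2
  · -- j maps into the filtered cset
    rintro ⟨k0, T'⟩ hp
    rcases Finset.mem_product.1 hp with ⟨hp1, hp2⟩
    simp only [Finset.mem_filter, Finset.mem_univ, true_and] at hp1
    rcases mem_csetF.1 hp2 with ⟨halt, hge⟩
    simp only at hp1 halt hge ⊢
    have hk0nT : k0 ∉ T' := fun h => by have := hge k0 h; omega
    have hlt : ∀ k ∈ T', k0 < k := by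
      intro k hk
      refine lt_of_blk_lt M N ?_
      have := hge k hk; omega
    rw [Finset.mem_filter]
    refine ⟨mem_csetF.2 ⟨?_, ?_⟩, ⟨k0, Finset.mem_insert_self _ _, hp1⟩⟩
    · intro k hk
      rcases Finset.mem_insert.1 hk with rfl | hkT
      · have hf : (insert k T').filter (fun l => l < k) = ∅ := by
          ext x
          simp only [Finset.mem_filter, Finset.mem_insert, Finset.notMem_empty, iff_false]
          rintro ⟨rfl | hx, hlt'⟩
          · exact absurd hlt' (lt_irrefl _)
          · exact absurd hlt' (not_lt.2 (le_of_lt (hlt x hx)))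
        rw [hf]
        simp only [Finset.card_empty, pow_zero, mul_one]
        rw [avert_eq_pow, hp1]
      · have hf : (insert k0 T').filter (fun l => l < k)
            = insert k0 (T'.filter (fun l => l < k)) := by
          ext x
          simp only [Finset.mem_filter, Finset.mem_insert]
          constructor
          · rintro ⟨rfl | hx, hlt'⟩
            · exact Or.inl rfl
            · exact Or.inr ⟨hx, hlt'⟩
          · rintro (rfl | ⟨hx, hlt'⟩)
            · exact ⟨Or.inl rfl, hlt k hkT⟩
            · exact ⟨Or.inr hx, hlt'⟩
        have hk0nf : k0 ∉ T'.filter (fun l => l < k) :=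
          fun h => hk0nT (Finset.mem_filter.1 h).1
        rw [hf, Finset.card_insert_of_notMem hk0nf]
        rw [halt k hkT]
        rw [pow_add, pow_add, pow_one]
        ring
    · intro k hk
      rcases Finset.mem_insert.1 hk with rfl | hkT
      · omega
      · have := hge k hkT; omega
  · -- left inverse
    intro T hT
    simp only
    exact Finset.insert_erase (Finset.mem_filter.1 (Finset.min'_mem _ (hne T hT))).1
  · -- right inverse
    rintro ⟨k0, T'⟩ hp
    rcases Finset.mem_product.1 hp with ⟨hp1, hp2⟩
    simp only [Finset.mem_filter, Finset.mem_univ, true_and] at hp1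
    rcases mem_csetF.1 hp2 with ⟨-, hge⟩
    simp only at hp1 hge ⊢
    have hk0nT : k0 ∉ T' := fun h => by have := hge k0 h; omega
    have hfil : pickT M N t (insert k0 T') = {k0} := by
      unfold pickT
      ext x
      simp only [Finset.mem_filter, Finset.mem_insert, Finset.mem_singleton]
      constructor
      · rintro ⟨rfl | hx, hb⟩
        · rfl
        · have := hge x hx; omega
      · rintro rfl
        exact ⟨Or.inl rfl, hp1⟩
    have h1 : ∀ (pf : (pickT M N t (insert k0 T')).Nonempty),
        (pickT M N t (insert k0 T')).min' pf = k0 := min'_eq_of_eq_singleton hfil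
    rw [h1, Finset.erase_insert hk0nT]

lemma ccount_rec {M : ℕ → ℕ} {N K t : ℕ} (hK : Ssum M N = K) (ht : t < N) :
    ccount M N K t = M t * ccount M N K (t+1) + ccount M N K (t+2) := by
  classical
  have hsplit := Finset.card_filter_add_card_filter_not
    (s := csetF M N K t ((-1)^t)) (p := fun T => ∃ k : Fin K, k ∈ T ∧ blk M N (k : ℕ) = t)
  have hnonhit : (csetF M N K t ((-1)^t)).filter
      (fun T => ¬ ∃ k : Fin K, k ∈ T ∧ blk M N (k : ℕ) = t) = csetF M N K (t+2) ((-1)^(t+2)) := by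
    ext T
    simp only [Finset.mem_filter, mem_csetF]
    constructor
    · rintro ⟨⟨halt, hge⟩, hnohit⟩
      push_neg at hnohit
      have hsign : ((-1 : ℤ))^(t+2) = (-1)^t := by
        rw [pow_add]; norm_num
      have hge2 : ∀ k ∈ T, t + 2 ≤ blk M N (k : ℕ) := by
        intro k hk
        have hTne : T.Nonempty := ⟨k, hk⟩
        set m := T.min' hTne with hm
        have hmT : m ∈ T := Finset.min'_mem _ _
        have hcnt : (T.filter (fun l => l < m)).card = 0 := by
          rw [Finset.card_eq_zero]
          ext x
          simp only [Finset.mem_filter, Finset.notMem_empty, iff_false]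
          rintro ⟨hxT, hxm⟩
          exact absurd (Finset.min'_le T x hxT) (not_le.2 hxm)
        have ham := halt m hmT
        rw [hcnt, pow_zero, mul_one, avert_eq_pow] at ham
        have hpar : blk M N (m : ℕ) % 2 = t % 2 := (neg_one_pow_eq_iff _ _).1 ham
        have hgem : t ≤ blk M N (m : ℕ) := hge m hmT
        have hnem : blk M N (m : ℕ) ≠ t := hnohit m hmT
        have hm2 : t + 2 ≤ blk M N (m : ℕ) := by omega
        have := blk_mono M N (show (m : ℕ) ≤ (k : ℕ) from Finset.min'_le T k hk)
        omega
      rw [hsign]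
      exact ⟨halt, hge2⟩
    · rintro ⟨halt, hge⟩
      have hsign : ((-1 : ℤ))^(t+2) = (-1)^t := by
        rw [pow_add]; norm_num
      rw [hsign] at halt
      refine ⟨⟨halt, fun k hk => by have := hge k hk; omega⟩, ?_⟩
      push_neg
      intro k hk
      have := hge k hk
      omega
  have hhit := card_hit hK ht
  rw [hnonhit] at hsplit
  unfold ccount at hhit ⊢
  omega

end Cset

section Xcf
open Finset

lemma xcf_N (M : ℕ → ℕ) (N : ℕ) : xcf M N N = 1 := by
  unfold xcf
  rw [show N - N = 0 by omega]
  simp [cf]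

lemma xcf_step {M : ℕ → ℕ} {N t : ℕ} (ht : t < N) :
    xcf M N t = 1 / (M t + xcf M N (t+1)) := by
  unfold xcf
  have h1 : N - t = (N - (t+1)) + 1 := by omega
  rw [h1, List.range_succ_eq_map, List.map_cons, List.map_map]
  have h2 : ((fun i => (M (t + i) : ℝ)) ∘ Nat.succ) = fun i => (M (t + 1 + i) : ℝ) := by
    funext i
    simp only [Function.comp_apply]
    congr 2
    omega
  rw [h2]
  simp [cf]

lemma xcf_pos {M : ℕ → ℕ} {N : ℕ} : ∀ t, t ≤ N → 0 < xcf M N t := by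
  suffices H : ∀ d t, N - t = d → t ≤ N → 0 < xcf M N t by
    intro t ht; exact H (N - t) t rfl ht
  intro d
  induction d using Nat.strong_induction_on with
  | _ d ih =>
    intro t hd ht
    rcases eq_or_lt_of_le ht with rfl | hlt
    · rw [xcf_N]; norm_num
    · rw [xcf_step hlt]
      have h2 := ih (N - (t+1)) (by omega) (t+1) rfl (by omega)
      positivity

lemma xcf_eq_ratio {M : ℕ → ℕ} {N K : ℕ} (hK : Ssum M N = K) :
    ∀ t, t ≤ N → xcf M N t = (ccount M N K (t+1) : ℝ) / (ccount M N K t) := by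
  suffices H : ∀ d t, N - t = d → t ≤ N →
      xcf M N t = (ccount M N K (t+1) : ℝ) / (ccount M N K t) by
    intro t ht; exact H (N - t) t rfl ht
  intro d
  induction d using Nat.strong_induction_on with
  | _ d ih =>
    intro t hd ht
    rcases eq_or_lt_of_le ht with rfl | hlt
    · rw [xcf_N, ccount_of_ge hK (le_refl t), ccount_of_ge hK (by omega)]
      norm_num
    · have hstep := xcf_step (M := M) hlt
      have hih := ih (N - (t+1)) (by omega) (t+1) rfl (by omega)
      have hrec := ccount_rec hK hlt
      have hc1 : (0:ℝ) < (ccount M N K t : ℝ) := by exact_mod_cast ccount_pos M N K t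
      have hc2 : (0:ℝ) < (ccount M N K (t+1) : ℝ) := by exact_mod_cast ccount_pos M N K (t+1)
      have hc3 : (0:ℝ) < (ccount M N K (t+2) : ℝ) := by exact_mod_cast ccount_pos M N K (t+2)
      rw [hstep, hih]
      have hrecR : (ccount M N K t : ℝ)
          = M t * (ccount M N K (t+1) : ℝ) + (ccount M N K (t+2) : ℝ) := by
        exact_mod_cast congrArg (Nat.cast : ℕ → ℝ) hrec
      rw [hrecR]
      field_simp

end Xcf

section Events
open Finset
open scoped Classical

/-- the set of positions where `α = 1` -/
noncomputable def pat {K : ℕ} (ω : Omega K) : Finset (Fin K) :=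
  Finset.univ.filter (fun k => ω.2.1 k = 0)

def bbit (M : ℕ → ℕ) (N : ℕ) {K : ℕ} (k : Fin K) : Bool := decide (avert M N k = 1)

lemma mem_pat {K : ℕ} {ω : Omega K} {k : Fin K} : k ∈ pat ω ↔ ω.2.1 k = 0 := by
  simp [pat]

lemma sgn_cases (b : Bool) : sgn b = 1 ∨ sgn b = -1 := by
  cases b <;> simp [sgn]

lemma gammaRV_eq {K : ℕ} (ω : Omega K) (k : Fin K) :
    gammaRV (k : ℕ) ω = epsRV ω * (-1) ^ ((pat ω).filter (fun l => l < k)).card := by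
  have h2 : Finset.univ.filter (fun l : Fin K => l < k)
      = Finset.univ.filter (fun l : Fin K => (l : ℕ) < (k : ℕ)) := by
    ext l
    simp only [Finset.mem_filter, Finset.mem_univ, true_and, Fin.lt_def]
  have h1 : (pat ω).filter (fun l => l < k)
      = (Finset.univ.filter (fun l : Fin K => (l : ℕ) < (k : ℕ))).filter
          (fun l => ω.2.1 l = 0) := by
    unfold pat
    rw [Finset.filter_comm, h2]
  unfold gammaRV
  rw [h1]
  congr 2
  unfold alphaN
  rw [Finset.sum_boole, Nat.cast_id]

lemma BRV_ne_ARV_iff {K : ℕ} (ω : Omega K) (k : Fin K) :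
    BRV k ω ≠ ARV k ω ↔ ω.2.1 k = 0 := by
  by_cases h : ω.2.1 k = 0
  · have hγ : gammaRV (k : ℕ) ω ≠ 0 := by
      rw [gammaRV_eq]
      apply mul_ne_zero
      · unfold epsRV
        rcases sgn_cases ω.1 with h1 | h1 <;> rw [h1] <;> norm_num
      · exact pow_ne_zero _ (by norm_num)
    unfold BRV ARV alphaRV
    rw [if_pos h]
    constructor
    · intro _; exact h
    · intro _ heq
      apply hγ
      have : (2 : ℤ) * gammaRV (k : ℕ) ω = 0 := by linarith [heq]
      omega
  · unfold BRV ARV alphaRV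
    rw [if_neg h]
    constructor
    · intro hne
      exfalso
      apply hne
      ring
    · intro h0
      exact absurd h0 h

lemma epsChange_iff {K : ℕ} {M : ℕ → ℕ} {N i : ℕ} (ω : Omega K) :
    epsChange M N i ω ↔ ∃ k : Fin K, k ∈ pat ω ∧ blk M N (k : ℕ) = i := by
  unfold epsChange
  constructor
  · rintro ⟨k, hb, hne⟩
    exact ⟨k, mem_pat.2 ((BRV_ne_ARV_iff ω k).1 hne), hb⟩
  · rintro ⟨k, hk, hb⟩
    exact ⟨k, hb, (BRV_ne_ARV_iff ω k).2 (mem_pat.1 hk)⟩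

lemma sgn_eq_iff {b : Bool} {z : ℤ} (hz : z = 1 ∨ z = -1) :
    sgn b = z ↔ b = decide (z = 1) := by
  rcases hz with rfl | rfl <;> cases b <;> simp [sgn]

lemma avert_cases (M : ℕ → ℕ) (N : ℕ) {K : ℕ} (k : Fin K) :
    avert M N k = 1 ∨ avert M N k = -1 := by
  unfold avert
  split_ifs <;> simp

lemma ARV_eq_avert_iff {K : ℕ} {M : ℕ → ℕ} {N : ℕ} (ω : Omega K) :
    (∀ k : Fin K, ARV k ω = avert M N k) ↔
      (altA M N (pat ω) (epsRV ω) ∧ ∀ k : Fin K, k ∉ pat ω → ω.2.2 k = bbit M N k) := by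
  constructor
  · intro h
    constructor
    · intro k hk
      have hα : ω.2.1 k = 0 := mem_pat.1 hk
      have := h k
      unfold ARV alphaRV at this
      rw [if_pos hα] at this
      simp only [sub_self, zero_mul, one_mul, zero_add] at this
      rw [gammaRV_eq] at this
      exact this.symm
    · intro k hk
      have hα : ¬ ω.2.1 k = 0 := fun hc => hk (mem_pat.2 hc)
      have := h k
      unfold ARV alphaRV betaRV at this
      rw [if_neg hα] at this
      simp only [sub_zero, one_mul, zero_mul, add_zero] at this
      exact (sgn_eq_iff (avert_cases M N k)).1 this
  · rintro ⟨halt, hβ⟩ k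
    by_cases hα : ω.2.1 k = 0
    · have hk : k ∈ pat ω := mem_pat.2 hα
      unfold ARV alphaRV
      rw [if_pos hα]
      simp only [sub_self, zero_mul, one_mul, zero_add]
      rw [gammaRV_eq]
      exact (halt k hk).symm
    · have hk : k ∉ pat ω := fun hc => hα (mem_pat.1 hc)
      unfold ARV alphaRV betaRV
      rw [if_neg hα]
      simp only [sub_zero, one_mul, zero_mul, add_zero]
      exact (sgn_eq_iff (avert_cases M N k)).2 (hβ k hk)

/-- the pairs (start sign, pattern) satisfying a predicate `Q` -/
noncomputable def PairsF (K : ℕ) (Q : ℤ → Finset (Fin K) → Prop) :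
    Finset (Bool × Finset (Fin K)) :=
  Finset.univ.filter (fun p => Q (sgn p.1) p.2)

lemma mem_PairsF {K : ℕ} {Q : ℤ → Finset (Fin K) → Prop} {p : Bool × Finset (Fin K)} :
    p ∈ PairsF K Q ↔ Q (sgn p.1) p.2 := by
  unfold PairsF
  simp

/-- the event, as a finset of sample points -/
noncomputable def EvF (M : ℕ → ℕ) (N K : ℕ) (Q : ℤ → Finset (Fin K) → Prop) :
    Finset (Omega K) :=
  Finset.univ.filter (fun ω =>
    (∀ k : Fin K, k ∉ pat ω → ω.2.2 k = bbit M N k) ∧ Q (epsRV ω) (pat ω))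

lemma fin3_cases (x : Fin 3) : x = 0 ∨ x = 1 ∨ x = 2 := by omega

lemma pat_mk {K : ℕ} (b : Bool) (S : Finset (Fin K)) (c : Fin K → Bool)
    (g : Fin K → Bool) :
    pat ((b, fun k => if k ∈ S then (0 : Fin 3) else if c k then 1 else 2,
      g) : Omega K) = S := by
  ext k
  rw [mem_pat]
  simp only
  by_cases hk : k ∈ S
  · simp [hk]
  · simp only [hk, if_neg hk, iff_false]
    by_cases hc : c k <;> simp [hc]

lemma card_EvF (M : ℕ → ℕ) (N K : ℕ) (Q : ℤ → Finset (Fin K) → Prop) :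
    (EvF M N K Q).card = (PairsF K Q).card * 2 ^ K := by
  classical
  have hcard : ((PairsF K Q) ×ˢ (Finset.univ : Finset (Fin K → Bool))).card
      = (PairsF K Q).card * 2 ^ K := by
    rw [Finset.card_product, Finset.card_univ]
    congr 1
    simp [Fintype.card_fun]
  rw [← hcard]
  refine Finset.card_bij' (fun ω _ =>
      (((ω.1, pat ω) : Bool × Finset (Fin K)),
        fun k => if ω.2.1 k = 0 then ω.2.2 k else decide (ω.2.1 k = 1)))
    (fun p _ => ((p.1.1,
      fun k => if k ∈ p.1.2 then (0 : Fin 3) else if p.2 k then 1 else 2,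
      fun k => if k ∈ p.1.2 then p.2 k else bbit M N k) : Omega K)) ?_ ?_ ?_ ?_
  · intro ω hω
    rcases Finset.mem_filter.1 hω with ⟨-, hβ, hQ⟩
    simp only [Finset.mem_product, Finset.mem_univ, and_true]
    exact Finset.mem_filter.2 ⟨Finset.mem_univ _, hQ⟩
  · rintro ⟨⟨b, S⟩, c⟩ hp
    rcases Finset.mem_product.1 hp with ⟨hp1, -⟩
    have hQ : Q (sgn b) S := (Finset.mem_filter.1 hp1).2
    refine Finset.mem_filter.2 ⟨Finset.mem_univ _, ?_, ?_⟩
    · intro k hk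
      rw [pat_mk] at hk
      simp only [if_neg hk]
    · rw [pat_mk]
      exact hQ
  · rintro ⟨w1, w2, w3⟩ hω
    rcases Finset.mem_filter.1 hω with ⟨-, hβ, -⟩
    simp only [Prod.mk.injEq]
    refine ⟨trivial, ?_, ?_⟩
    · funext k
      by_cases hk : w2 k = 0
      · have hmem : k ∈ pat ((w1, w2, w3) : Omega K) := mem_pat.2 hk
        rw [if_pos hmem, hk]
      · have hmem : k ∉ pat ((w1, w2, w3) : Omega K) := fun hc => hk (mem_pat.1 hc)
        rw [if_neg hmem]
        simp only [if_neg hk]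
        rcases fin3_cases (w2 k) with h3 | h3 | h3
        · exact absurd h3 hk
        · simp [h3]
        · simp [h3]
    · funext k
      by_cases hk : k ∈ pat ((w1, w2, w3) : Omega K)
      · have hα : w2 k = 0 := mem_pat.1 hk
        simp [hk, hα]
      · have hα : ¬ w2 k = 0 := fun hc => hk (mem_pat.2 hc)
        simp only [if_neg hk]
        exact (hβ k hk).symm
  · rintro ⟨⟨b, S⟩, c⟩ hp
    simp only [Prod.mk.injEq]
    refine ⟨⟨trivial, pat_mk b S c _⟩, ?_⟩
    funext k
    by_cases hk : k ∈ S
    · simp [hk]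
    · simp only [if_neg hk]
      by_cases hc : c k
      · simp [hc]
      · simp only [Bool.not_eq_true] at hc
        simp [hc]
end Events

section Factor
open Finset
open scoped Classical

variable {M : ℕ → ℕ} {N K : ℕ}

/-- admissible low parts: patterns in blocks `≤ j'` hitting block `j'`, with their sign -/
noncomputable def LsetF (M : ℕ → ℕ) (N K j' : ℕ) : Finset (Bool × Finset (Fin K)) :=
  Finset.univ.filter (fun p => altA M N p.2 (sgn p.1) ∧
    (∃ k : Fin K, k ∈ p.2 ∧ blk M N (k : ℕ) = j') ∧
    ∀ k ∈ p.2, blk M N (k : ℕ) ≤ j')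

lemma mem_LsetF {j' : ℕ} {p : Bool × Finset (Fin K)} :
    p ∈ LsetF M N K j' ↔ altA M N p.2 (sgn p.1) ∧
      (∃ k : Fin K, k ∈ p.2 ∧ blk M N (k : ℕ) = j') ∧
      ∀ k ∈ p.2, blk M N (k : ℕ) ≤ j' := by
  unfold LsetF
  simp

/-- the full conditioning predicate on (sign, pattern) -/
def Qden (M : ℕ → ℕ) (N : ℕ) {K : ℕ} (j' j : ℕ) (e : ℤ) (S : Finset (Fin K)) : Prop :=
  altA M N S e ∧ (∃ k : Fin K, k ∈ S ∧ blk M N (k : ℕ) = j') ∧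
    (∀ i : ℕ, j' < i → i < j → ¬ ∃ k : Fin K, k ∈ S ∧ blk M N (k : ℕ) = i)

/-- last element of an admissible low part sits in block `j'`, so the sign of the
continuation is `(-1)^(j'+1)`. -/
lemma low_sign {j' : ℕ} {e : ℤ} {Sl : Finset (Fin K)}
    (halt : altA M N Sl e)
    (hhit : ∃ k : Fin K, k ∈ Sl ∧ blk M N (k : ℕ) = j')
    (hbd : ∀ k ∈ Sl, blk M N (k : ℕ) ≤ j') :
    e * (-1) ^ Sl.card = (-1) ^ (j' + 1) := by
  obtain ⟨k0, hk0S, hk0b⟩ := hhit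
  have hmax : ∀ l ∈ Sl, l ≠ k0 → l < k0 := by
    intro l hl hne
    rcases lt_trichotomy l k0 with h | h | h
    · exact h
    · exact absurd h hne
    · exfalso
      have h1 : blk M N (k0 : ℕ) ≤ blk M N (l : ℕ) := blk_mono M N (le_of_lt h)
      have h2 : blk M N (l : ℕ) = j' := le_antisymm (hbd l hl) (by omega)
      exact hne (altA_one_per_block halt l hl k0 hk0S (by rw [h2, hk0b]))
  have hfe : Sl.filter (fun l => l < k0) = Sl.erase k0 := by
    ext x
    simp only [Finset.mem_filter, Finset.mem_erase]
    constructor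
    · rintro ⟨hx, hlt⟩
      exact ⟨fun hc => absurd hlt (by rw [hc]; exact lt_irrefl _), hx⟩
    · rintro ⟨hne, hx⟩
      exact ⟨hx, hmax x hx hne⟩
  have hcnt : (Sl.filter (fun l => l < k0)).card = Sl.card - 1 := by
    rw [hfe, Finset.card_erase_of_mem hk0S]
  have hc1 : 1 ≤ Sl.card := Finset.card_pos.2 ⟨k0, hk0S⟩
  have hclause := halt k0 hk0S
  rw [hcnt, avert_eq_pow, hk0b] at hclause
  obtain ⟨d, hd⟩ : ∃ d, Sl.card = d + 1 := ⟨Sl.card - 1, by omega⟩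
  rw [hd] at hclause ⊢
  simp only [Nat.add_sub_cancel] at hclause
  rw [pow_succ, pow_succ, ← mul_assoc, ← hclause]

lemma filter_lt_low {j' : ℕ} {S : Finset (Fin K)} {k : Fin K}
    (hbk : blk M N (k : ℕ) ≤ j') :
    (S.filter (fun l : Fin K => blk M N (l : ℕ) ≤ j')).filter (fun l => l < k)
      = S.filter (fun l => l < k) := by
  ext x
  simp only [Finset.mem_filter]
  constructor
  · rintro ⟨⟨hx, -⟩, hlt⟩
    exact ⟨hx, hlt⟩
  · rintro ⟨hx, hlt⟩
    exact ⟨⟨hx, le_trans (blk_mono M N (le_of_lt hlt)) hbk⟩, hlt⟩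

lemma card_pairs_factor {j' j : ℕ} (hK : Ssum M N = K) (hj' : j' < j) (hjN : j < N)
    (hodd : Odd (j - j')) (R : Finset (Fin K) → Prop) :
    (PairsF K (fun e S => Qden M N j' j e S ∧
        R (S.filter (fun k : Fin K => j ≤ blk M N (k : ℕ))))).card
      = (LsetF M N K j').card * ((csetF M N K j ((-1)^j)).filter R).card := by
  classical
  have hpar : ((-1 : ℤ)) ^ (j' + 1) = (-1) ^ j := by
    rw [neg_one_pow_eq_iff]
    obtain ⟨m, hm⟩ := hodd
    omega
  rw [← Finset.card_product]
  refine Finset.card_bij' (fun p _ =>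
      (((p.1, p.2.filter (fun k : Fin K => blk M N (k : ℕ) ≤ j')) : Bool × Finset (Fin K)),
        p.2.filter (fun k : Fin K => j ≤ blk M N (k : ℕ))))
    (fun q _ => ((q.1.1, q.1.2 ∪ q.2) : Bool × Finset (Fin K))) ?_ ?_ ?_ ?_
  · -- forward membership
    rintro ⟨b, S⟩ hp
    obtain ⟨⟨halt, hhit, hmid⟩, hR⟩ := mem_PairsF.1 hp
    have hsplit : ∀ k ∈ S, blk M N (k : ℕ) ≤ j' ∨ j ≤ blk M N (k : ℕ) := by
      intro k hk
      by_contra hc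
      push_neg at hc
      exact hmid (blk M N (k : ℕ)) (by omega) (by omega) ⟨k, hk, rfl⟩
    have hlowS : ∀ k ∈ S.filter (fun k : Fin K => blk M N (k : ℕ) ≤ j'), blk M N (k : ℕ) ≤ j' :=
      fun k hk => (Finset.mem_filter.1 hk).2
    have haltlow : altA M N (S.filter (fun k : Fin K => blk M N (k : ℕ) ≤ j')) (sgn b) := by
      intro k hk
      rcases Finset.mem_filter.1 hk with ⟨hkS, hkb⟩
      rw [filter_lt_low hkb]
      exact halt k hkS
    have hhitlow : ∃ k : Fin K, k ∈ S.filter (fun k : Fin K => blk M N (k : ℕ) ≤ j') ∧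
        blk M N (k : ℕ) = j' := by
      obtain ⟨k, hk, hkb⟩ := hhit
      exact ⟨k, Finset.mem_filter.2 ⟨hk, le_of_eq hkb⟩, hkb⟩
    have hsign : sgn b * (-1 : ℤ) ^ (S.filter (fun k : Fin K => blk M N (k : ℕ) ≤ j')).card
        = (-1) ^ j := by
      rw [low_sign haltlow hhitlow hlowS, hpar]
    simp only [Finset.mem_product]
    refine ⟨mem_LsetF.2 ⟨haltlow, hhitlow, hlowS⟩, ?_⟩
    refine Finset.mem_filter.2 ⟨mem_csetF.2 ⟨?_, fun k hk => (Finset.mem_filter.1 hk).2⟩, hR⟩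
    -- altA of the high part with sign (-1)^j
    intro k hk
    rcases Finset.mem_filter.1 hk with ⟨hkS, hkb⟩
    have hflt : S.filter (fun l => l < k)
        = (S.filter (fun l : Fin K => blk M N (l : ℕ) ≤ j'))
          ∪ ((S.filter (fun l : Fin K => j ≤ blk M N (l : ℕ))).filter (fun l => l < k)) := by
      ext x
      simp only [Finset.mem_union, Finset.mem_filter]
      constructor
      · rintro ⟨hx, hlt⟩
        rcases hsplit x hx with hlow | hhigh
        · exact Or.inl ⟨hx, hlow⟩
        · exact Or.inr ⟨⟨hx, hhigh⟩, hlt⟩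
      · rintro (⟨hx, hlow⟩ | ⟨⟨hx, hhigh⟩, hlt⟩)
        · refine ⟨hx, lt_of_blk_lt M N ?_⟩
          omega
        · exact ⟨hx, hlt⟩
    have hdisj : Disjoint (S.filter (fun l : Fin K => blk M N (l : ℕ) ≤ j'))
        ((S.filter (fun l : Fin K => j ≤ blk M N (l : ℕ))).filter (fun l => l < k)) := by
      rw [Finset.disjoint_left]
      intro x hx1 hx2
      have h1 := (Finset.mem_filter.1 hx1).2
      have h2 := (Finset.mem_filter.1 (Finset.mem_filter.1 hx2).1).2
      omega
    have hcards : (S.filter (fun l => l < k)).card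
        = (S.filter (fun l : Fin K => blk M N (l : ℕ) ≤ j')).card
          + ((S.filter (fun l : Fin K => j ≤ blk M N (l : ℕ))).filter (fun l => l < k)).card := by
      rw [hflt, Finset.card_union_of_disjoint hdisj]
    have := halt k hkS
    rw [hcards, pow_add, ← mul_assoc, hsign] at this
    exact this
  · -- backward membership
    rintro ⟨⟨b, Sl⟩, T⟩ hq
    rcases Finset.mem_product.1 hq with ⟨hq1, hq2⟩
    obtain ⟨haltl, hhitl, hbdl⟩ := mem_LsetF.1 hq1
    obtain ⟨hcs, hR⟩ := Finset.mem_filter.1 hq2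
    obtain ⟨haltT, hgeT⟩ := mem_csetF.1 hcs
    have hsign : sgn b * (-1 : ℤ) ^ Sl.card = (-1) ^ j := by
      rw [low_sign haltl hhitl hbdl, hpar]
    have hdisj : Disjoint Sl T := by
      rw [Finset.disjoint_left]
      intro x hx1 hx2
      have h1 := hbdl x hx1
      have h2 := hgeT x hx2
      omega
    have hord : ∀ x ∈ Sl, ∀ y ∈ T, x < y := by
      intro x hx y hy
      refine lt_of_blk_lt M N ?_
      have h1 := hbdl x hx
      have h2 := hgeT y hy
      omega
    have hfillow : (Sl ∪ T).filter (fun k : Fin K => blk M N (k : ℕ) ≤ j') = Sl := by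
      ext x
      simp only [Finset.mem_filter, Finset.mem_union]
      constructor
      · rintro ⟨hx | hx, hb⟩
        · exact hx
        · exact absurd (hgeT x hx) (by omega)
      · intro hx
        exact ⟨Or.inl hx, hbdl x hx⟩
    have hfilhigh : (Sl ∪ T).filter (fun k : Fin K => j ≤ blk M N (k : ℕ)) = T := by
      ext x
      simp only [Finset.mem_filter, Finset.mem_union]
      constructor
      · rintro ⟨hx | hx, hb⟩
        · exact absurd (hbdl x hx) (by omega)
        · exact hx
      · intro hx
        exact ⟨Or.inr hx, hgeT x hx⟩
    refine mem_PairsF.2 ⟨⟨?_, ?_, ?_⟩, ?_⟩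
    · -- altA of the union
      intro k hk
      rcases Finset.mem_union.1 hk with hkl | hkT
      · have hfl : (Sl ∪ T).filter (fun l => l < k) = Sl.filter (fun l => l < k) := by
          ext x
          simp only [Finset.mem_filter, Finset.mem_union]
          constructor
          · rintro ⟨hx | hx, hlt⟩
            · exact ⟨hx, hlt⟩
            · exact absurd hlt (not_lt.2 (le_of_lt (hord k hkl x hx)))
          · rintro ⟨hx, hlt⟩
            exact ⟨Or.inl hx, hlt⟩
        rw [hfl]
        exact haltl k hkl
      · have hfl : (Sl ∪ T).filter (fun l => l < k)
            = Sl ∪ (T.filter (fun l => l < k)) := by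
          ext x
          simp only [Finset.mem_filter, Finset.mem_union]
          constructor
          · rintro ⟨hx | hx, hlt⟩
            · exact Or.inl hx
            · exact Or.inr ⟨hx, hlt⟩
          · rintro (hx | ⟨hx, hlt⟩)
            · exact ⟨Or.inl hx, hord x hx k hkT⟩
            · exact ⟨Or.inr hx, hlt⟩
        have hdisj2 : Disjoint Sl (T.filter (fun l => l < k)) :=
          Finset.disjoint_of_subset_right (Finset.filter_subset _ _) hdisj
        rw [hfl, Finset.card_union_of_disjoint hdisj2, pow_add, ← mul_assoc, hsign]
        exact haltT k hkT
    · obtain ⟨k, hk, hkb⟩ := hhitl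
      exact ⟨k, Finset.mem_union_left _ hk, hkb⟩
    · intro i hi1 hi2
      rintro ⟨k, hk, hkb⟩
      rcases Finset.mem_union.1 hk with hkl | hkT
      · have := hbdl k hkl; omega
      · have := hgeT k hkT; omega
    · rw [hfilhigh]
      exact hR
  · -- left inverse
    rintro ⟨b, S⟩ hp
    obtain ⟨⟨halt, hhit, hmid⟩, hR⟩ := mem_PairsF.1 hp
    have hsplit : ∀ k ∈ S, blk M N (k : ℕ) ≤ j' ∨ j ≤ blk M N (k : ℕ) := by
      intro k hk
      by_contra hc
      push_neg at hc
      exact hmid (blk M N (k : ℕ)) (by omega) (by omega) ⟨k, hk, rfl⟩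
    simp only [Prod.mk.injEq]
    refine ⟨trivial, ?_⟩
    ext x
    simp only [Finset.mem_union, Finset.mem_filter]
    constructor
    · rintro (⟨hx, -⟩ | ⟨hx, -⟩) <;> exact hx
    · intro hx
      rcases hsplit x hx with h | h
      · exact Or.inl ⟨hx, h⟩
      · exact Or.inr ⟨hx, h⟩
  · -- right inverse
    rintro ⟨⟨b, Sl⟩, T⟩ hq
    rcases Finset.mem_product.1 hq with ⟨hq1, hq2⟩
    obtain ⟨haltl, hhitl, hbdl⟩ := mem_LsetF.1 hq1
    obtain ⟨hcs, hR⟩ := Finset.mem_filter.1 hq2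
    obtain ⟨haltT, hgeT⟩ := mem_csetF.1 hcs
    simp only [Prod.mk.injEq]
    constructor
    · refine ⟨trivial, ?_⟩
      ext x
      simp only [Finset.mem_filter, Finset.mem_union]
      constructor
      · rintro ⟨hx | hx, hb⟩
        · exact hx
        · exact absurd (hgeT x hx) (by omega)
      · intro hx
        exact ⟨Or.inl hx, hbdl x hx⟩
    · ext x
      simp only [Finset.mem_filter, Finset.mem_union]
      constructor
      · rintro ⟨hx | hx, hb⟩
        · exact absurd (hbdl x hx) (by omega)
        · exact hx
      · intro hx
        exact ⟨Or.inr hx, hgeT x hx⟩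

lemma LsetF_nonempty {j' : ℕ} (hK : Ssum M N = K) (hM : 0 < M j') (hj'N : j' < N) :
    0 < (LsetF M N K j').card := by
  have hlt : Ssum M j' < K := by
    rw [← hK]
    calc Ssum M j' < Ssum M (j' + 1) := by rw [Ssum_succ]; omega
    _ ≤ Ssum M N := Ssum_mono M (by omega)
  set k0 : Fin K := ⟨Ssum M j', hlt⟩ with hk0
  have hb : blk M N (k0 : ℕ) = j' :=
    blk_eq_of M N _ j' hj'N (le_refl _) (by rw [Ssum_succ]; show Ssum M j' < _; omega)
  have hsgn : ∃ b : Bool, sgn b = (-1 : ℤ)^j' := by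
    rcases Nat.even_or_odd j' with h | h
    · exact ⟨true, by simp [sgn, Even.neg_one_pow h]⟩
    · exact ⟨false, by simp [sgn, Odd.neg_one_pow h]⟩
  obtain ⟨b, hbs⟩ := hsgn
  refine Finset.card_pos.2 ⟨(b, {k0}), mem_LsetF.2 ⟨?_, ?_, ?_⟩⟩
  · intro k hk
    rw [Finset.mem_singleton] at hk
    subst hk
    have : ({k0} : Finset (Fin K)).filter (fun l => l < k0) = ∅ := by
      ext x
      simp only [Finset.mem_filter, Finset.mem_singleton, Finset.notMem_empty, iff_false]
      rintro ⟨rfl, hlt⟩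
      exact absurd hlt (lt_irrefl _)
    rw [this]
    simp only [Finset.card_empty, pow_zero, mul_one]
    rw [avert_eq_pow, hb, hbs]
  · exact ⟨k0, Finset.mem_singleton_self _, hb⟩
  · intro k hk
    rw [Finset.mem_singleton] at hk
    subst hk
    omega

end Factor

section Final
open Finset
open scoped Classical ENNReal

lemma unif_apply (K : ℕ) (s : Set (Omega K)) :
    unif K s = (((Set.toFinite s).toFinset.card : ℕ) : ℝ≥0∞)
      * ((Fintype.card (Omega K) : ℝ≥0∞))⁻¹ := by
  classical
  unfold unif
  rw [PMF.toMeasure_apply_fintype _ s]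
  have hpt : ∀ a : Omega K, s.indicator (⇑(PMF.uniformOfFintype (Omega K))) a
      = if a ∈ (Set.toFinite s).toFinset then ((Fintype.card (Omega K) : ℝ≥0∞))⁻¹ else 0 := by
    intro a
    by_cases ha : a ∈ s
    · rw [Set.indicator_of_mem ha, PMF.uniformOfFintype_apply,
        if_pos ((Set.Finite.mem_toFinset _).2 ha)]
    · rw [Set.indicator_of_notMem ha,
        if_neg (fun hc => ha ((Set.Finite.mem_toFinset _).1 hc))]
  rw [Finset.sum_congr rfl (fun a _ => hpt a), Finset.sum_ite_mem, Finset.univ_inter,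
    Finset.sum_const, nsmul_eq_mul]

lemma mem_EvF {M : ℕ → ℕ} {N K : ℕ} {Q : ℤ → Finset (Fin K) → Prop} {ω : Omega K} :
    ω ∈ EvF M N K Q ↔
      (∀ k : Fin K, k ∉ pat ω → ω.2.2 k = bbit M N k) ∧ Q (epsRV ω) (pat ω) := by
  unfold EvF
  simp

lemma enn_ratio (a b n : ℕ) (ha : 0 < a) (hn : 0 < n) :
    (((a : ℝ≥0∞) * ((n : ℝ≥0∞))⁻¹))⁻¹ * ((b : ℝ≥0∞) * ((n : ℝ≥0∞))⁻¹)
      = (b : ℝ≥0∞) / (a : ℝ≥0∞) := by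
  have ha0 : (a : ℝ≥0∞) ≠ 0 := by
    simp only [ne_eq, Nat.cast_eq_zero]
    omega
  have hatop : (a : ℝ≥0∞) ≠ ⊤ := ENNReal.natCast_ne_top a
  have hn0 : (n : ℝ≥0∞) ≠ 0 := by
    simp only [ne_eq, Nat.cast_eq_zero]
    omega
  have hntop : (n : ℝ≥0∞) ≠ ⊤ := ENNReal.natCast_ne_top n
  have h1 : ((a : ℝ≥0∞) * ((n : ℝ≥0∞))⁻¹)⁻¹ = ((a : ℝ≥0∞))⁻¹ * (n : ℝ≥0∞) := by
    rw [ENNReal.mul_inv (Or.inl ha0) (Or.inl hatop), inv_inv]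
  rw [h1]
  calc ((a : ℝ≥0∞))⁻¹ * (n : ℝ≥0∞) * ((b : ℝ≥0∞) * ((n : ℝ≥0∞))⁻¹)
      = ((b : ℝ≥0∞) * ((a : ℝ≥0∞))⁻¹) * ((n : ℝ≥0∞) * ((n : ℝ≥0∞))⁻¹) := by ring
    _ = (b : ℝ≥0∞) * ((a : ℝ≥0∞))⁻¹ := by rw [ENNReal.mul_inv_cancel hn0 hntop, mul_one]
    _ = (b : ℝ≥0∞) / (a : ℝ≥0∞) := by rw [div_eq_mul_inv]


end Final

open scoped Classical ENNReal

/-- Subsequent phase after a change at odd gap (Theorem 1): conditionally on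
`Y(0) = a`, `ε_{j'} = 1` and `ε_i = 0` for `j' < i < j` (with `j - j'` odd, as forced
by the alternating-sign rule), the probability of a change in block `j` is
`M_j · x_j^N` (0-indexed blocks; `xcf M N j` is the continued fraction `x_j^N`,
and when `j = N - 1` this equals `M_j/(M_j + 1)` by the convention `x_{N+1}^N = 1`). -/
theorem stmt16 (K N : ℕ) (M : ℕ → ℕ) (hM : ∀ m < N, 0 < M m)
    (hK : ∑ m ∈ Finset.range N, M m = K)
    (j j' : ℕ) (hj' : j' < j) (hjN : j < N) (hodd : Odd (j - j')) :
    ProbabilityTheory.cond (unif K)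
        ({ω | ∀ k : Fin K, ARV k ω = avert M N k} ∩ {ω | epsChange M N j' ω} ∩
          {ω | ∀ i : ℕ, j' < i → i < j → ¬ epsChange M N i ω})
        {ω | epsChange M N j ω} =
      ENNReal.ofReal ((M j : ℝ) * xcf M N j) := by
  classical
  have hK' : Ssum M N = K := hK
  set Sden : Set (Omega K) :=
    {ω | ∀ k : Fin K, ARV k ω = avert M N k} ∩ {ω | epsChange M N j' ω} ∩
      {ω | ∀ i : ℕ, j' < i → i < j → ¬ epsChange M N i ω} with hSden
  set Tset : Set (Omega K) := {ω | epsChange M N j ω} with hTset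
  -- identification of the two events with EvF finsets
  have hdenF : (Set.toFinite Sden).toFinset
      = EvF M N K (fun e S => Qden M N j' j e S) := by
    ext ω
    rw [Set.Finite.mem_toFinset]
    simp only [hSden, Set.mem_inter_iff, Set.mem_setOf_eq, mem_EvF]
    rw [ARV_eq_avert_iff (M := M) (N := N) ω]
    unfold Qden
    constructor
    · rintro ⟨⟨⟨halt, hβ⟩, hchg⟩, hmid⟩
      refine ⟨hβ, halt, ?_, ?_⟩
      · obtain ⟨k, hk, hb⟩ := (epsChange_iff (M := M) (N := N) ω).1 hchg
        exact ⟨k, hk, hb⟩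
      · intro i h1 h2 hex
        exact hmid i h1 h2 ((epsChange_iff ω).2 hex)
    · rintro ⟨hβ, halt, hhit, hmid⟩
      refine ⟨⟨⟨halt, hβ⟩, (epsChange_iff ω).2 hhit⟩, ?_⟩
      intro i h1 h2 hchg
      exact hmid i h1 h2 ((epsChange_iff ω).1 hchg)
  have hnumF : (Set.toFinite (Sden ∩ Tset)).toFinset
      = EvF M N K (fun e S => Qden M N j' j e S ∧
          ∃ k : Fin K, k ∈ S ∧ blk M N (k : ℕ) = j) := by
    ext ω
    rw [Set.Finite.mem_toFinset]
    simp only [hSden, hTset, Set.mem_inter_iff, Set.mem_setOf_eq, mem_EvF]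
    rw [ARV_eq_avert_iff (M := M) (N := N) ω]
    unfold Qden
    constructor
    · rintro ⟨⟨⟨⟨halt, hβ⟩, hchg⟩, hmid⟩, hhitj⟩
      refine ⟨hβ, ⟨halt, ?_, ?_⟩, ?_⟩
      · exact (epsChange_iff ω).1 hchg
      · intro i h1 h2 hex
        exact hmid i h1 h2 ((epsChange_iff ω).2 hex)
      · exact (epsChange_iff ω).1 hhitj
    · rintro ⟨hβ, ⟨halt, hhit, hmid⟩, hhitj⟩
      refine ⟨⟨⟨⟨halt, hβ⟩, (epsChange_iff ω).2 hhit⟩, ?_⟩, (epsChange_iff ω).2 hhitj⟩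
      intro i h1 h2 hchg
      exact hmid i h1 h2 ((epsChange_iff ω).1 hchg)
  -- counts
  set L := (LsetF M N K j').card with hL
  have hLpos : 0 < L := LsetF_nonempty hK' (hM j' (by omega)) (by omega)
  have hcden : (PairsF K (fun e S => Qden M N j' j e S)).card = L * ccount M N K j := by
    have h1 := card_pairs_factor (K := K) hK' hj' hjN hodd (fun _ => True)
    have h2 : PairsF K (fun e S => Qden M N j' j e S ∧ True)
        = PairsF K (fun e S => Qden M N j' j e S) := by
      ext p
      rw [mem_PairsF, mem_PairsF]
      simp
    rw [h2] at h1
    rw [h1, ← hL]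
    congr 1
    unfold ccount
    congr 1
    ext T
    simp
  have hcnum : (PairsF K (fun e S => Qden M N j' j e S ∧
      ∃ k : Fin K, k ∈ S ∧ blk M N (k : ℕ) = j)).card
      = L * (M j * ccount M N K (j+1)) := by
    have h1 := card_pairs_factor (K := K) hK' hj' hjN hodd
      (fun T => ∃ k : Fin K, k ∈ T ∧ blk M N (k : ℕ) = j)
    have h2 : PairsF K (fun e S => Qden M N j' j e S ∧
        ∃ k : Fin K, k ∈ S.filter (fun k : Fin K => j ≤ blk M N (k : ℕ)) ∧
          blk M N (k : ℕ) = j)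
        = PairsF K (fun e S => Qden M N j' j e S ∧
            ∃ k : Fin K, k ∈ S ∧ blk M N (k : ℕ) = j) := by
      ext p
      rw [mem_PairsF, mem_PairsF]
      constructor
      · rintro ⟨hq, k, hk, hb⟩
        exact ⟨hq, k, (Finset.mem_filter.1 hk).1, hb⟩
      · rintro ⟨hq, k, hk, hb⟩
        exact ⟨hq, k, Finset.mem_filter.2 ⟨hk, le_of_eq hb.symm⟩, hb⟩
    rw [h2] at h1
    rw [h1, ← hL]
    congr 1
    rw [← card_hit hK' hjN]
    congr 1
    ext T
    simp only [Finset.mem_filter]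
  -- measures
  have hmeas : MeasurableSet Sden := (Set.toFinite Sden).measurableSet
  rw [ProbabilityTheory.cond_apply hmeas (unif K) Tset]
  rw [unif_apply, unif_apply, hdenF, hnumF, card_EvF, card_EvF, hcden, hcnum]
  -- final computation
  set c1 := ccount M N K j with hc1
  set c2 := ccount M N K (j+1) with hc2
  have hc1p : 0 < c1 := ccount_pos M N K j
  have hc2p : 0 < c2 := ccount_pos M N K (j+1)
  have hΩ : 0 < Fintype.card (Omega K) := Fintype.card_pos
  rw [enn_ratio _ _ _ (Nat.mul_pos (Nat.mul_pos hLpos hc1p) (pow_pos (by norm_num) K)) hΩ]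
  have hxcf : xcf M N j = (c2 : ℝ) / (c1 : ℝ) := xcf_eq_ratio hK' j (by omega)
  have hreal : (M j : ℝ) * xcf M N j = ((M j * c2 : ℕ) : ℝ) / ((c1 : ℕ) : ℝ) := by
    rw [hxcf]
    push_cast
    ring
  rw [hreal, ENNReal.ofReal_div_of_pos (by exact_mod_cast hc1p), ENNReal.ofReal_natCast,
    ENNReal.ofReal_natCast]
  -- now: (L * (M j * c2) * 2^K) / (L * c1 * 2^K) = (M j * c2) / c1 in ℝ≥0∞
  have hA0 : ((L * 2^K : ℕ) : ℝ≥0∞) ≠ 0 := by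
    have h2K : 0 < 2^K := pow_pos (by norm_num) K
    simp only [ne_eq, Nat.cast_eq_zero]
    have : 0 < L * 2^K := Nat.mul_pos hLpos h2K
    omega
  have hAtop : ((L * 2^K : ℕ) : ℝ≥0∞) ≠ ⊤ := ENNReal.natCast_ne_top _
  have hnum' : ((L * (M j * c2) * 2^K : ℕ) : ℝ≥0∞)
      = ((L * 2^K : ℕ) : ℝ≥0∞) * ((M j * c2 : ℕ) : ℝ≥0∞) := by
    push_cast
    ring
  have hden' : ((L * c1 * 2^K : ℕ) : ℝ≥0∞)
      = ((L * 2^K : ℕ) : ℝ≥0∞) * ((c1 : ℕ) : ℝ≥0∞) := by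
    push_cast
    ring
  rw [hnum', hden', ENNReal.mul_div_mul_left _ _ hA0 hAtop]
end
end

section
/- Transition probability with no prior change: for the stationary simple random walk on G_K started at a with N blocks of lengths M_1,...,M_N, and for 2 ≤ n ≤ N, P(ε_n = 1 | ε_{n-1} = 0, ..., ε_1 = 0, Y(0) = a) = M_n/(M_n + 1 + x_{n+1}^N), with convention x_{N+1}^N = 1 (so for n = N this equals M_N/(M_N+2)). -/
open MeasureTheory ProbabilityTheory Finset

noncomputable section

namespace S17
open scoped Classical ENNReal

/-! ### The recursion `G` and the continued fraction -/

def Gf (M : ℕ → ℕ) (N : ℕ) (b : ℕ) : ℕ :=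
  if b < N then M b * Gf M N (b+1) + Gf M N (b+2) else 1
termination_by N - b
decreasing_by all_goals omega

lemma Gf_of_le {M : ℕ → ℕ} {N b : ℕ} (h : N ≤ b) : Gf M N b = 1 := by
  rw [Gf]; simp [Nat.not_lt.2 h]

lemma Gf_of_lt {M : ℕ → ℕ} {N b : ℕ} (h : b < N) :
    Gf M N b = M b * Gf M N (b+1) + Gf M N (b+2) := by
  rw [Gf]; simp [h]

lemma Gf_pos (M : ℕ → ℕ) (N : ℕ) : ∀ b, 0 < Gf M N b := by
  intro b
  induction' hb : N - b using Nat.strong_induction_on with t ih generalizing b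
  by_cases h : b < N
  · rw [Gf_of_lt h]
    have : 0 < Gf M N (b+2) := ih (N - (b+2)) (by omega) (b+2) rfl
    omega
  · rw [Gf_of_le (by omega)]; norm_num

lemma xcf_succ {M : ℕ → ℕ} {N b : ℕ} (h : b < N) :
    xcf M N b = 1 / (M b + xcf M N (b+1)) := by
  unfold xcf
  have h1 : N - b = (N - (b+1)) + 1 := by omega
  rw [h1, List.range_succ_eq_map]
  simp only [List.map_cons, List.map_map, cf]
  have h2 : ((fun i => (M (b + i) : ℝ)) ∘ Nat.succ) = fun x => (M (b + 1 + x) : ℝ) := by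
    funext x
    have e : b + Nat.succ x = b + 1 + x := by omega
    simp only [Function.comp, e]
  rw [h2]
  norm_num

lemma xcf_eq (M : ℕ → ℕ) (N : ℕ) :
    ∀ b ≤ N, xcf M N b = (Gf M N (b+1) : ℝ) / (Gf M N b : ℝ) := by
  intro b
  induction' hb : N - b using Nat.strong_induction_on with t ih generalizing b
  intro hbN
  by_cases h : b < N
  · rw [xcf_succ h, ih (N - (b+1)) (by omega) (b+1) rfl (by omega), Gf_of_lt h]
    have h1 : (0:ℝ) < Gf M N (b+1) := by exact_mod_cast Gf_pos M N (b+1)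
    have h2 : (0:ℝ) < Gf M N (b+2) := by exact_mod_cast Gf_pos M N (b+2)
    have e : b + 1 + 1 = b + 2 := rfl
    rw [e]
    push_cast
    have hG1 : (Gf M N (b+1):ℝ) ≠ 0 := ne_of_gt h1
    have hden1 : (0:ℝ) < (M b : ℝ) + (Gf M N (b+2):ℝ) / (Gf M N (b+1):ℝ) := by
      have h3 : (0:ℝ) < (Gf M N (b+2):ℝ) / (Gf M N (b+1):ℝ) := div_pos h2 h1
      have h4 : (0:ℝ) ≤ (M b:ℝ) := Nat.cast_nonneg _
      linarith
    have hden2 : (0:ℝ) < (M b:ℝ) * (Gf M N (b+1):ℝ) + (Gf M N (b+2):ℝ) := by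
      have h3 : (0:ℝ) ≤ (M b:ℝ) * (Gf M N (b+1):ℝ) := by positivity
      linarith
    rw [div_eq_div_iff (ne_of_gt hden1) (ne_of_gt hden2)]
    field_simp
  · rw [Gf_of_le (by omega), Gf_of_le (by omega)]
    have hbN' : b = N := by omega
    subst hbN'
    unfold xcf
    simp [cf]

/-! ### Counting alternating subsets -/

variable {K : ℕ}

def Valid (a : Fin K → ℤ) (s : ℤ) (T : Finset (Fin K)) : Prop :=
  ∀ k ∈ T, s * (-1) ^ ((T.filter (fun i => i < k)).card) = a k

def Dcnt (a : Fin K → ℤ) (k₀ : ℕ) (s : ℤ) : ℕ :=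
  (univ.filter (fun T : Finset (Fin K) =>
    (∀ k ∈ T, k₀ ≤ (k : ℕ)) ∧ Valid a s T)).card

lemma Dcnt_top (a : Fin K → ℤ) (s : ℤ) : Dcnt a K s = 1 := by
  unfold Dcnt
  rw [show (univ.filter (fun T : Finset (Fin K) =>
      (∀ k ∈ T, K ≤ (k : ℕ)) ∧ Valid a s T)) = {∅} from ?_]
  · simp
  · ext T
    simp only [mem_filter, mem_univ, true_and, mem_singleton]
    constructor
    · rintro ⟨h1, _⟩
      ext k
      simp only [Finset.notMem_empty, iff_false]
      intro hk
      exact absurd (h1 k hk) (by omega)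
    · rintro rfl
      exact ⟨fun k hk => absurd hk (Finset.notMem_empty k),
        fun k hk => absurd hk (Finset.notMem_empty k)⟩

lemma filter_lt_card_erase {T : Finset (Fin K)} {p k : Fin K} (hpT : p ∈ T) (hpk : p < k) :
    (T.filter (fun i => i < k)).card = ((T.erase p).filter (fun i => i < k)).card + 1 := by
  rw [Finset.filter_erase, Finset.card_erase_of_mem (by simp [hpT, hpk])]
  have h1 : p ∈ T.filter (fun i => i < k) := by simp [hpT, hpk]
  have h2 : 0 < (T.filter (fun i => i < k)).card := Finset.card_pos.2 ⟨p, h1⟩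
  omega

lemma Dcnt_rec (a : Fin K → ℤ) {k₀ : ℕ} (hk : k₀ < K) (s : ℤ) :
    Dcnt a k₀ s = Dcnt a (k₀+1) s +
      (if a ⟨k₀, hk⟩ = s then Dcnt a (k₀+1) (-s) else 0) := by
  set p : Fin K := ⟨k₀, hk⟩ with hp
  have hsplit :
      ((univ.filter (fun T : Finset (Fin K) => (∀ k ∈ T, k₀ ≤ (k : ℕ)) ∧ Valid a s T)).filter
          (fun T => p ∉ T)).card +
        ((univ.filter (fun T : Finset (Fin K) => (∀ k ∈ T, k₀ ≤ (k : ℕ)) ∧ Valid a s T)).filter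
          (fun T => ¬ p ∉ T)).card =
      Dcnt a k₀ s := Finset.card_filter_add_card_filter_not _
  have hA : ((univ.filter (fun T : Finset (Fin K) => (∀ k ∈ T, k₀ ≤ (k : ℕ)) ∧ Valid a s T)).filter
        (fun T => p ∉ T)) = univ.filter (fun T : Finset (Fin K) =>
      (∀ k ∈ T, k₀ + 1 ≤ (k : ℕ)) ∧ Valid a s T) := by
    rw [Finset.filter_filter]
    apply Finset.filter_congr
    intro T _
    constructor
    · rintro ⟨⟨h1, h2⟩, h3⟩
      refine ⟨fun k hk' => ?_, h2⟩
      have hx := h1 k hk'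
      have hne : k ≠ p := fun h => h3 (h ▸ hk')
      have : (k : ℕ) ≠ k₀ := fun h => hne (Fin.ext h)
      omega
    · rintro ⟨h1, h2⟩
      refine ⟨⟨fun k hk' => by have := h1 k hk'; omega, h2⟩, fun hpT => ?_⟩
      have := h1 p hpT
      simp [hp] at this
  have hBcard : ((univ.filter (fun T : Finset (Fin K) =>
        (∀ k ∈ T, k₀ ≤ (k : ℕ)) ∧ Valid a s T)).filter
        (fun T => ¬ p ∉ T)).card =
      if a p = s then Dcnt a (k₀+1) (-s) else 0 := by
    by_cases has : a p = s
    · rw [if_pos has]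
      unfold Dcnt
      refine Finset.card_bij' (fun T _ => T.erase p) (fun T _ => insert p T) ?hi ?hj ?li ?ri
      case hi =>
        intro T hT
        simp only [mem_filter, mem_univ, true_and, not_not] at hT ⊢
        obtain ⟨⟨h1, h2⟩, h3⟩ := hT
        constructor
        · intro k hk'
          have hkT := Finset.mem_of_mem_erase hk'
          have hne := Finset.ne_of_mem_erase hk'
          have hx := h1 k hkT
          have : (k : ℕ) ≠ k₀ := fun h => hne (Fin.ext h)
          omega
        · intro k hk'
          have hkT := Finset.mem_of_mem_erase hk'
          have hne := Finset.ne_of_mem_erase hk'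
          have hpk : p < k := by
            have hx := h1 k hkT
            have hy : (k:ℕ) ≠ k₀ := fun h => hne (Fin.ext h)
            have : k₀ < (k:ℕ) := by omega
            exact this
          have hc := filter_lt_card_erase h3 hpk
          have hv := h2 k hkT
          rw [hc] at hv
          rw [← hv]
          ring
      case hj =>
        intro T hT
        simp only [mem_filter, mem_univ, true_and, not_not] at hT ⊢
        obtain ⟨h1, h2⟩ := hT
        have hpT : p ∉ T := fun h => by have := h1 p h; simp [hp] at this
        refine ⟨⟨fun k hk' => ?_, fun k hk' => ?_⟩, Finset.mem_insert_self p T⟩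
        · rcases Finset.mem_insert.1 hk' with rfl | hk''
          · simp [hp]
          · have := h1 k hk''; omega
        · rcases Finset.mem_insert.1 hk' with rfl | hk''
          · have he : (insert p T).filter (fun i => i < p) = ∅ := by
              ext i
              simp only [Finset.mem_filter, Finset.notMem_empty, iff_false, not_and]
              intro hi
              rcases Finset.mem_insert.1 hi with rfl | hi'
              · exact lt_irrefl _
              · intro hlt
                have h5 := h1 i hi'
                have h6 : (i:ℕ) < (p:ℕ) := hlt
                simp [hp] at h6
                omega
            rw [he]
            simpa using has.symm
          · have hpk : p < k := by
              have hx := h1 k hk''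
              have : k₀ < (k:ℕ) := by omega
              exact this
            have hins : (insert p T).erase p = T := Finset.erase_insert hpT
            have hc := filter_lt_card_erase (Finset.mem_insert_self p T) hpk
            rw [hins] at hc
            rw [hc]
            have hv := h2 k hk''
            rw [← hv]
            ring
      case li =>
        intro T hT
        simp only [mem_filter, mem_univ, true_and, not_not] at hT
        exact Finset.insert_erase hT.2
      case ri =>
        intro T hT
        simp only [mem_filter, mem_univ, true_and] at hT
        apply Finset.erase_insert
        intro h
        have := hT.1 p h
        simp [hp] at this
    · rw [if_neg has]
      rw [Finset.card_eq_zero]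
      ext T
      simp only [mem_filter, Finset.notMem_empty, iff_false, not_and, not_not, mem_univ,
        true_and, and_imp]
      intro h1 h2 h3
      exfalso
      apply has
      have hv := h2 p h3
      have he : T.filter (fun i => i < p) = ∅ := by
        ext i
        simp only [Finset.mem_filter, Finset.notMem_empty, iff_false, not_and]
        intro hi hlt
        have := h1 i hi
        have : (i:ℕ) < k₀ := hlt
        omega
      rw [he] at hv
      simpa using hv.symm
  rw [← hsplit, hA, hBcard]
  rfl

/-! ### Block structure -/

def asign (b : ℕ) : ℤ := if b % 2 = 0 then 1 else -1

lemma asign_succ (b : ℕ) : asign (b+1) = -asign b := by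
  unfold asign
  rcases Nat.even_or_odd b with h | h
  · have h0 : b % 2 = 0 := Nat.even_iff.1 h
    have h1 : (b+1) % 2 = 1 := by omega
    simp [h0, h1]
  · have h0 : b % 2 = 1 := Nat.odd_iff.1 h
    have h1 : (b+1) % 2 = 0 := by omega
    simp [h0, h1]

lemma asign_ne_neg (b : ℕ) : asign b ≠ -asign b := by
  unfold asign; split <;> norm_num

lemma Ssum_mono (M : ℕ → ℕ) : Monotone (Ssum M) := by
  intro i j hij
  exact Finset.sum_le_sum_of_subset (Finset.range_subset_range.2 hij)

lemma Ssum_succ (M : ℕ → ℕ) (b : ℕ) : Ssum M (b+1) = Ssum M b + M b :=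
  Finset.sum_range_succ M b

lemma blk_eq (M : ℕ → ℕ) {N b k : ℕ} (hb : b < N)
    (h1 : Ssum M b ≤ k) (h2 : k < Ssum M (b+1)) : blk M N k = b := by
  unfold blk
  rw [show (Finset.range N).filter (fun m => Ssum M (m + 1) ≤ k) = Finset.range b from ?_,
    Finset.card_range]
  ext m
  simp only [Finset.mem_filter, Finset.mem_range]
  constructor
  · rintro ⟨hmN, hm⟩
    by_contra hmb
    have hx : b + 1 ≤ m + 1 := by omega
    have := Ssum_mono M hx
    omega
  · intro hm
    refine ⟨by omega, ?_⟩
    have hx : m + 1 ≤ b := by omega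
    have := Ssum_mono M hx
    omega

lemma avert_eq (M : ℕ → ℕ) (N : ℕ) (k : Fin K) :
    avert M N k = asign (blk M N (k : ℕ)) := rfl

section Main
variable {N : ℕ} {M : ℕ → ℕ}

lemma block_main (hM : ∀ m < N, 0 < M m) (hK : Ssum M N = K) :
    ∀ b ≤ N, Dcnt (avert M N : Fin K → ℤ) (Ssum M b) (asign b) = Gf M N b ∧
      Dcnt (avert M N : Fin K → ℤ) (Ssum M b) (-asign b) = Gf M N (b+1) := by
  intro b
  induction' hb : N - b using Nat.strong_induction_on with t ih generalizing b
  intro hbN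
  by_cases h : b < N
  · obtain ⟨ih1, ih2⟩ := ih (N - (b+1)) (by omega) (b+1) rfl (by omega)
    rw [asign_succ] at ih1 ih2
    rw [neg_neg] at ih2
    have hSb : Ssum M (b+1) = Ssum M b + M b := Ssum_succ M b
    have hSK : Ssum M (b+1) ≤ K := hK ▸ Ssum_mono M (by omega : b + 1 ≤ N)
    have inner : ∀ d ≤ M b,
        Dcnt (avert M N : Fin K → ℤ) (Ssum M (b+1) - d) (asign b)
            = d * Gf M N (b+1) + Gf M N (b+2) ∧
          Dcnt (avert M N : Fin K → ℤ) (Ssum M (b+1) - d) (-asign b) = Gf M N (b+1) := by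
      intro d
      induction d with
      | zero => intro _; simpa using ⟨ih2, ih1⟩
      | succ d ihd =>
        intro hd
        obtain ⟨j1, j2⟩ := ihd (by omega)
        set k₀ := Ssum M (b+1) - (d+1) with hk₀
        have hk₀K : k₀ < K := by
          have : 0 < M b := hM b h
          omega
        have hk₀1 : k₀ + 1 = Ssum M (b+1) - d := by omega
        have hblk : blk M N k₀ = b := blk_eq M h (by omega) (by omega)
        have havert : (avert M N : Fin K → ℤ) ⟨k₀, hk₀K⟩ = asign b := by
          rw [avert_eq]; simp only [hblk]
        constructor
        · rw [Dcnt_rec (avert M N) hk₀K (asign b), hk₀1, if_pos havert, j1, j2]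
          ring
        · rw [Dcnt_rec (avert M N) hk₀K (-asign b), hk₀1,
            if_neg (by rw [havert]; exact asign_ne_neg b), j2]
          simp
    obtain ⟨f1, f2⟩ := inner (M b) le_rfl
    have hS : Ssum M (b+1) - M b = Ssum M b := by omega
    rw [hS] at f1 f2
    refine ⟨?_, f2⟩
    rw [f1, Gf_of_lt h]
  · have hbN' : b = N := by omega
    subst hbN'
    rw [hK, Dcnt_top, Dcnt_top, Gf_of_le le_rfl, Gf_of_le (by omega)]
    exact ⟨rfl, rfl⟩

lemma Dcnt_sum (hM : ∀ m < N, 0 < M m) (hK : Ssum M N = K) {b : ℕ} (hb : b ≤ N) :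
    Dcnt (avert M N : Fin K → ℤ) (Ssum M b) 1 + Dcnt (avert M N : Fin K → ℤ) (Ssum M b) (-1)
      = Gf M N b + Gf M N (b+1) := by
  obtain ⟨h1, h2⟩ := block_main hM hK b hb
  rcases Nat.even_or_odd b with h | h
  · have h0 : b % 2 = 0 := Nat.even_iff.1 h
    have ha : asign b = 1 := by simp [asign, h0]
    rw [ha] at h1 h2
    rw [h1, h2]
  · have h0 : b % 2 = 1 := Nat.odd_iff.1 h
    have ha : asign b = -1 := by simp [asign, h0]
    rw [ha] at h1 h2
    norm_num at h2
    omega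

end Main

/-! ### Event characterization -/

def Tset (ω : Omega K) : Finset (Fin K) := univ.filter (fun k => ω.2.1 k = 0)

lemma mem_Tset {ω : Omega K} {k : Fin K} : k ∈ Tset ω ↔ ω.2.1 k = 0 := by
  simp [Tset]

lemma gamma_pm (j : ℕ) (ω : Omega K) : gammaRV j ω = 1 ∨ gammaRV j ω = -1 := by
  unfold gammaRV epsRV sgn
  rcases Nat.even_or_odd (∑ k ∈ Finset.univ.filter (fun k : Fin K => (k : ℕ) < j), alphaN k ω)
    with h | h
  · rw [h.neg_one_pow]
    cases ω.1 <;> simp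
  · rw [h.neg_one_pow]
    cases ω.1 <;> simp

lemma BA_ne_iff (k : Fin K) (ω : Omega K) : BRV k ω ≠ ARV k ω ↔ ω.2.1 k = 0 := by
  unfold BRV ARV alphaRV
  by_cases h : ω.2.1 k = 0
  · simp only [h, if_pos]
    rcases gamma_pm (k : ℕ) ω with hg | hg <;> simp [hg, h]
  · simp [h]

lemma gamma_count (k : Fin K) (ω : Omega K) :
    gammaRV (k : ℕ) ω = epsRV ω * (-1) ^ (((Tset ω).filter (fun i => i < k)).card) := by
  unfold gammaRV
  congr 2
  rw [Finset.card_filter]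
  rw [Tset, Finset.sum_filter]
  rw [Finset.sum_filter]
  apply Finset.sum_congr rfl
  intro i _
  by_cases h1 : (i : ℕ) < (k : ℕ) <;> by_cases h2 : ω.2.1 i = 0 <;>
    simp [h1, h2, alphaN, Fin.lt_def]

lemma blk_ge_iff (M : ℕ → ℕ) {N j : ℕ} (hj : j ≤ N) (k : ℕ) :
    j ≤ blk M N k ↔ Ssum M j ≤ k := by
  constructor
  · intro h
    by_contra hlt
    push_neg at hlt
    have hj1 : 1 ≤ j := by
      by_contra h0
      have : j = 0 := by omega
      subst this
      simp [Ssum] at hlt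
    have hsub : (Finset.range N).filter (fun m => Ssum M (m + 1) ≤ k) ⊆
        Finset.range (j - 1) := by
      intro m hm
      simp only [Finset.mem_filter, Finset.mem_range] at hm ⊢
      by_contra hmj
      have hx : j ≤ m + 1 := by omega
      have := Ssum_mono M hx
      omega
    have := Finset.card_le_card hsub
    rw [Finset.card_range] at this
    unfold blk at h
    omega
  · intro h
    have hsub : Finset.range j ⊆ (Finset.range N).filter (fun m => Ssum M (m + 1) ≤ k) := by
      intro m hm
      simp only [Finset.mem_range] at hm
      simp only [Finset.mem_filter, Finset.mem_range]
      refine ⟨by omega, ?_⟩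
      have hx : m + 1 ≤ j := by omega
      have := Ssum_mono M hx
      omega
    have := Finset.card_le_card hsub
    rw [Finset.card_range] at this
    exact this

lemma evt_char (M : ℕ → ℕ) (N : ℕ) {j : ℕ} (hj : j ≤ N) (ω : Omega K) :
    ((∀ k : Fin K, ARV k ω = avert M N k) ∧ (∀ i : ℕ, i < j → ¬ epsChange M N i ω)) ↔
    ((∀ k ∈ Tset ω, Ssum M j ≤ (k : ℕ)) ∧ Valid (avert M N) (epsRV ω) (Tset ω) ∧
      (∀ k ∉ Tset ω, sgn (ω.2.2 k) = avert M N k)) := by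
  have hA : (∀ k : Fin K, ARV k ω = avert M N k) ↔
      (Valid (avert M N) (epsRV ω) (Tset ω) ∧
        (∀ k ∉ Tset ω, sgn (ω.2.2 k) = avert M N k)) := by
    constructor
    · intro h
      constructor
      · intro k hk
        rw [mem_Tset] at hk
        have := h k
        rw [ARV] at this
        rw [alphaRV, if_pos hk] at this
        simp only [sub_self, zero_mul, one_mul, zero_add] at this
        rw [gamma_count] at this
        exact this
      · intro k hk
        rw [mem_Tset] at hk
        have := h k
        rw [ARV, alphaRV, if_neg hk] at this
        simpa [betaRV] using this
    · rintro ⟨h1, h2⟩ k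
      by_cases hk : ω.2.1 k = 0
      · have := h1 k (mem_Tset.2 hk)
        rw [ARV, alphaRV, if_pos hk]
        simp only [sub_self, zero_mul, one_mul, zero_add]
        rw [gamma_count]
        exact this
      · have := h2 k (fun h => hk (mem_Tset.1 h))
        rw [ARV, alphaRV, if_neg hk]
        simpa [betaRV] using this
  have hB : (∀ i : ℕ, i < j → ¬ epsChange M N i ω) ↔
      (∀ k ∈ Tset ω, Ssum M j ≤ (k : ℕ)) := by
    constructor
    · intro h k hk
      rw [← blk_ge_iff M hj]
      by_contra hlt
      push_neg at hlt
      exact h _ hlt ⟨k, rfl, (BA_ne_iff k ω).2 (mem_Tset.1 hk)⟩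
    · rintro h i hi ⟨k, hbk, hne⟩
      have hk := mem_Tset.2 ((BA_ne_iff k ω).1 hne)
      have := h k hk
      rw [← blk_ge_iff M hj] at this
      omega
  rw [hA, hB]
  tauto

/-! ### Counting the events -/

lemma sgn_eq_iff {b : Bool} {z : ℤ} (hz : z = 1 ∨ z = -1) : sgn b = z ↔ b = decide (z = 1) := by
  rcases hz with rfl | rfl <;> cases b <;> simp [sgn]

lemma filter_mem_univ (T : Finset (Fin K)) : univ.filter (fun k => k ∈ T) = T := by
  ext k; simp

lemma filter_not_mem_univ (T : Finset (Fin K)) : univ.filter (fun k => k ∉ T) = Tᶜ := by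
  ext k; simp

lemma beta_count (a : Fin K → ℤ) (ha : ∀ k, a k = 1 ∨ a k = -1) (T : Finset (Fin K)) :
    (univ.filter (fun β : Fin K → Bool => ∀ k ∉ T, sgn (β k) = a k)).card = 2 ^ T.card := by
  have h1 : (univ.filter (fun β : Fin K → Bool => ∀ k ∉ T, sgn (β k) = a k)) =
      Fintype.piFinset (fun k => if k ∈ T then (univ : Finset Bool) else {decide (a k = 1)}) := by
    ext β
    simp only [Finset.mem_filter, Finset.mem_univ, true_and, Fintype.mem_piFinset]
    constructor
    · intro h k
      by_cases hk : k ∈ T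
      · simp [hk]
      · rw [if_neg hk, Finset.mem_singleton]
        exact (sgn_eq_iff (ha k)).1 (h k hk)
    · intro h k hk
      have := h k
      rw [if_neg hk, Finset.mem_singleton] at this
      exact (sgn_eq_iff (ha k)).2 this
  rw [h1, Fintype.card_piFinset]
  have h2 : ∀ k : Fin K,
      (if k ∈ T then (univ : Finset Bool) else {decide (a k = 1)}).card
        = if k ∈ T then 2 else 1 := by
    intro k; split <;> simp
  rw [Finset.prod_congr rfl (fun k _ => h2 k), Finset.prod_ite, Finset.prod_const,
    Finset.prod_const, one_pow, mul_one, filter_mem_univ]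

lemma alpha_count (T : Finset (Fin K)) :
    (univ.filter (fun αv : Fin K → Fin 3 => (univ.filter (fun k => αv k = 0)) = T)).card
      = 2 ^ (K - T.card) := by
  have h1 : (univ.filter (fun αv : Fin K → Fin 3 => (univ.filter (fun k => αv k = 0)) = T)) =
      Fintype.piFinset (fun k => if k ∈ T then ({0} : Finset (Fin 3)) else {0}ᶜ) := by
    ext αv
    simp only [Finset.mem_filter, Finset.mem_univ, true_and, Fintype.mem_piFinset]
    rw [Finset.ext_iff]
    constructor
    · intro h k
      have := h k
      simp only [Finset.mem_filter, Finset.mem_univ, true_and] at this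
      by_cases hk : k ∈ T
      · simp [hk, this.2 hk]
      · simp only [hk, if_neg, if_false, Finset.mem_compl, Finset.mem_singleton]
        intro h0
        exact hk (this.1 h0)
    · intro h k
      have := h k
      simp only [Finset.mem_filter, Finset.mem_univ, true_and]
      by_cases hk : k ∈ T
      · rw [if_pos hk, Finset.mem_singleton] at this
        simp [hk, this]
      · rw [if_neg hk, Finset.mem_compl, Finset.mem_singleton] at this
        simp [hk, this]
  rw [h1, Fintype.card_piFinset]
  have h2 : ∀ k : Fin K,
      (if k ∈ T then ({0} : Finset (Fin 3)) else {0}ᶜ).card = if k ∈ T then 1 else 2 := by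
    intro k
    split
    · simp
    · rw [Finset.card_compl]
      simp
  rw [Finset.prod_congr rfl (fun k _ => h2 k), Finset.prod_ite, Finset.prod_const,
    Finset.prod_const, one_pow, one_mul, filter_not_mem_univ, Finset.card_compl,
    Fintype.card_fin]

lemma card_evt (a : Fin K → ℤ) (ha : ∀ k, a k = 1 ∨ a k = -1) (c : ℕ) :
    (univ.filter (fun ω : Omega K =>
        (∀ k ∈ Tset ω, c ≤ (k : ℕ)) ∧ Valid a (epsRV ω) (Tset ω) ∧
          (∀ k ∉ Tset ω, sgn (ω.2.2 k) = a k))).card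
      = (Dcnt a c 1 + Dcnt a c (-1)) * 2 ^ K := by
  rw [Finset.card_filter, Fintype.sum_prod_type]
  have hmid : ∀ ε : Bool,
      (∑ y : (Fin K → Fin 3) × (Fin K → Bool),
        if ((∀ k ∈ Tset (ε, y), c ≤ (k : ℕ)) ∧ Valid a (epsRV (ε, y)) (Tset (ε, y)) ∧
            (∀ k ∉ Tset (ε, y), sgn ((ε, y).2.2 k) = a k)) then 1 else 0)
        = Dcnt a c (sgn ε) * 2 ^ K := by
    intro ε
    rw [Fintype.sum_prod_type]
    have hβ : ∀ αv : Fin K → Fin 3,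
        (∑ β : Fin K → Bool,
          if ((∀ k ∈ Tset (ε, αv, β), c ≤ (k : ℕ)) ∧
              Valid a (epsRV (ε, αv, β)) (Tset (ε, αv, β)) ∧
              (∀ k ∉ Tset (ε, αv, β), sgn ((ε, αv, β).2.2 k) = a k)) then (1:ℕ) else 0)
          = if ((∀ k ∈ (univ.filter (fun k => αv k = 0)), c ≤ (k : ℕ)) ∧
              Valid a (sgn ε) (univ.filter (fun k => αv k = 0)))
            then 2 ^ (univ.filter (fun k => αv k = 0)).card else 0 := by
      intro αv
      have hT : ∀ β : Fin K → Bool, Tset (ε, αv, β) = univ.filter (fun k => αv k = 0) := by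
        intro β; rfl
      by_cases h : ((∀ k ∈ (univ.filter (fun k => αv k = 0)), c ≤ (k : ℕ)) ∧
          Valid a (sgn ε) (univ.filter (fun k => αv k = 0)))
      · rw [if_pos h]
        have hterm : ∀ β : Fin K → Bool,
            (if ((∀ k ∈ Tset (ε, αv, β), c ≤ (k : ℕ)) ∧
                Valid a (epsRV (ε, αv, β)) (Tset (ε, αv, β)) ∧
                (∀ k ∉ Tset (ε, αv, β), sgn ((ε, αv, β).2.2 k) = a k)) then (1:ℕ) else 0)
              = if (∀ k ∉ (univ.filter (fun k => αv k = 0)), sgn (β k) = a k) then 1 else 0 := by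
          intro β
          rw [hT β]
          by_cases h3 : (∀ k ∉ (univ.filter (fun k => αv k = 0)), sgn (β k) = a k)
          · rw [if_pos h3, if_pos ⟨h.1, h.2, h3⟩]
          · rw [if_neg h3, if_neg (fun hc => h3 hc.2.2)]
        rw [Finset.sum_congr rfl (fun β _ => hterm β), ← Finset.card_filter]
        exact beta_count a ha _
      · have hterm : ∀ β : Fin K → Bool,
            (if ((∀ k ∈ Tset (ε, αv, β), c ≤ (k : ℕ)) ∧
                Valid a (epsRV (ε, αv, β)) (Tset (ε, αv, β)) ∧
                (∀ k ∉ Tset (ε, αv, β), sgn ((ε, αv, β).2.2 k) = a k)) then (1:ℕ) else 0)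
              = 0 := by
          intro β
          rw [hT β]
          rw [if_neg (fun hc => h ⟨hc.1, hc.2.1⟩)]
        rw [Finset.sum_congr rfl (fun β _ => hterm β), if_neg h]
        simp
    rw [Finset.sum_congr rfl (fun αv _ => hβ αv)]
    rw [← Finset.sum_fiberwise_of_maps_to
      (fun (αv : Fin K → Fin 3) _ => Finset.mem_univ (univ.filter (fun k => αv k = 0)))]
    have hfib : ∀ T : Finset (Fin K),
        (∑ αv ∈ univ.filter (fun αv : Fin K → Fin 3 =>
            (univ.filter (fun k => αv k = 0)) = T),
          if ((∀ k ∈ (univ.filter (fun k => αv k = 0)), c ≤ (k : ℕ)) ∧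
              Valid a (sgn ε) (univ.filter (fun k => αv k = 0)))
            then 2 ^ (univ.filter (fun k => αv k = 0)).card else 0)
        = (if ((∀ k ∈ T, c ≤ (k : ℕ)) ∧ Valid a (sgn ε) T) then (2 ^ K : ℕ) else 0) := by
      intro T
      have hcongr : ∀ αv ∈ univ.filter (fun αv : Fin K → Fin 3 =>
          (univ.filter (fun k => αv k = 0)) = T),
          (if ((∀ k ∈ (univ.filter (fun k => αv k = 0)), c ≤ (k : ℕ)) ∧
              Valid a (sgn ε) (univ.filter (fun k => αv k = 0)))
            then 2 ^ (univ.filter (fun k => αv k = 0)).card else 0)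
          = (if ((∀ k ∈ T, c ≤ (k : ℕ)) ∧ Valid a (sgn ε) T) then (2 ^ T.card : ℕ) else 0) := by
        intro αv hαv
        rw [(Finset.mem_filter.1 hαv).2]
      rw [Finset.sum_congr rfl hcongr, Finset.sum_const, alpha_count, smul_eq_mul]
      have hTK : T.card ≤ K := by
        have := Finset.card_le_univ T
        simpa using this
      split
      · rw [← pow_add]
        congr 1
        omega
      · rw [mul_zero]
    rw [Finset.sum_congr rfl (fun T _ => hfib T)]
    rw [← Finset.sum_filter]
    rw [Finset.sum_const, smul_eq_mul]
    rfl
  rw [Fintype.sum_bool, hmid true, hmid false]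
  have h1 : sgn true = 1 := rfl
  have h2 : sgn false = -1 := rfl
  rw [h1, h2]
  ring

/-! ### Measure of a finset event -/

lemma unif_coe (F : Finset (Omega K)) :
    unif K ↑F = (F.card : ℝ≥0∞) / (Fintype.card (Omega K) : ℝ≥0∞) := by
  rw [unif, PMF.toMeasure_uniformOfFintype_apply _ ((F : Set (Omega K)).toFinite.measurableSet)]
  congr 1
  simp

end S17

/-- Subsequent phase with no prior change (Theorem 1): conditionally on `Y(0) = a` and
`ε_i = 0` for all blocks `i < j`, the probability of a change in block `j` is
`M_j/(M_j + 1 + x_{j+1}^N)` (0-indexed; `xcf M N (j+1)` is the continued fraction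
`x_{j+1}^N`, equal to `1` when `j = N - 1`, giving `M_j/(M_j+2)`). -/
theorem stmt17 (K N : ℕ) (M : ℕ → ℕ) (hM : ∀ m < N, 0 < M m)
    (hK : ∑ m ∈ Finset.range N, M m = K)
    (j : ℕ) (hj : 1 ≤ j) (hjN : j < N) :
    ProbabilityTheory.cond (unif K)
        ({ω | ∀ k : Fin K, ARV k ω = avert M N k} ∩
          {ω | ∀ i : ℕ, i < j → ¬ epsChange M N i ω})
        {ω | epsChange M N j ω} =
      ENNReal.ofReal ((M j : ℝ) / ((M j : ℝ) + 1 + xcf M N (j + 1))) := by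
  classical
  have hKs : Ssum M N = K := hK
  have hj1N : j + 1 ≤ N := hjN
  have haval : ∀ k : Fin K, avert M N k = 1 ∨ avert M N k = -1 := by
    intro k
    unfold avert
    split
    · exact Or.inl rfl
    · exact Or.inr rfl
  set Pred : ℕ → Omega K → Prop := fun i ω =>
    (∀ k ∈ S17.Tset ω, Ssum M i ≤ (k : ℕ)) ∧
      S17.Valid (avert M N) (epsRV ω) (S17.Tset ω) ∧
      (∀ k ∉ S17.Tset ω, sgn (ω.2.2 k) = avert M N k) with hPred
  have hchar : ∀ i : ℕ, i ≤ N → ∀ ω : Omega K,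
      (((∀ k : Fin K, ARV k ω = avert M N k) ∧
        (∀ i' : ℕ, i' < i → ¬ epsChange M N i' ω)) ↔ Pred i ω) := by
    intro i hi ω
    exact S17.evt_char M N hi ω
  have hcard : ∀ i : ℕ, i ≤ N →
      (univ.filter (Pred i)).card = (S17.Gf M N i + S17.Gf M N (i+1)) * 2 ^ K := by
    intro i hi
    have h := S17.card_evt (avert M N) haval (Ssum M i)
    rw [S17.Dcnt_sum hM hKs hi] at h
    exact h
  -- the conditioning event as a finset
  have hSset : ({ω : Omega K | ∀ k : Fin K, ARV k ω = avert M N k} ∩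
      {ω : Omega K | ∀ i : ℕ, i < j → ¬ epsChange M N i ω}) = ↑(univ.filter (Pred j)) := by
    ext ω
    simp only [Set.mem_inter_iff, Set.mem_setOf_eq, Finset.coe_filter, Finset.mem_univ,
      true_and, Set.mem_setOf_eq]
    exact hchar j (le_of_lt hjN) ω
  -- the intersection with the target event
  have hSTset : (({ω : Omega K | ∀ k : Fin K, ARV k ω = avert M N k} ∩
      {ω : Omega K | ∀ i : ℕ, i < j → ¬ epsChange M N i ω}) ∩
        {ω : Omega K | epsChange M N j ω})
      = ↑((univ.filter (Pred j)).filter (fun ω => epsChange M N j ω)) := by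
    rw [hSset]
    ext ω
    simp only [Set.mem_inter_iff, Finset.coe_filter, Set.mem_setOf_eq, Finset.mem_filter,
      Finset.mem_univ, true_and, Finset.mem_coe]
  -- cards
  have hc1 : (univ.filter (Pred j)).card = (S17.Gf M N j + S17.Gf M N (j+1)) * 2 ^ K :=
    hcard j (le_of_lt hjN)
  have hfe : (univ.filter (Pred j)).filter (fun ω => ¬ epsChange M N j ω)
      = univ.filter (Pred (j+1)) := by
    rw [Finset.filter_filter]
    apply Finset.filter_congr
    intro ω _
    constructor
    · rintro ⟨hp, hne⟩
      have horig := (hchar j (le_of_lt hjN) ω).2 hp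
      refine (hchar (j+1) hj1N ω).1 ⟨horig.1, fun i hi => ?_⟩
      rcases Nat.lt_succ_iff_lt_or_eq.1 hi with h | rfl
      · exact horig.2 i h
      · exact hne
    · intro hp
      have horig := (hchar (j+1) hj1N ω).2 hp
      exact ⟨(hchar j (le_of_lt hjN) ω).1 ⟨horig.1, fun i hi => horig.2 i (by omega)⟩,
        horig.2 j (by omega)⟩
  have hcT : ((univ.filter (Pred j)).filter (fun ω => epsChange M N j ω)).card
      = (M j * S17.Gf M N (j+1)) * 2 ^ K := by
    have hsplit := Finset.card_filter_add_card_filter_not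
      (s := univ.filter (Pred j)) (fun ω => epsChange M N j ω)
    rw [hfe, hcard (j+1) hj1N, hc1] at hsplit
    have he2 : j + 1 + 1 = j + 2 := rfl
    rw [he2] at hsplit
    have hGj : (S17.Gf M N j + S17.Gf M N (j+1)) * 2 ^ K
        = (M j * S17.Gf M N (j+1)) * 2 ^ K + (S17.Gf M N (j+1) + S17.Gf M N (j+2)) * 2 ^ K := by
      rw [S17.Gf_of_lt hjN]
      ring
    rw [hGj] at hsplit
    omega
  -- measures
  have hD0 : (Fintype.card (Omega K) : ENNReal) ≠ 0 := by
    simp [Fintype.card_ne_zero]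
  have hDtop : (Fintype.card (Omega K) : ENNReal) ≠ ⊤ := ENNReal.natCast_ne_top _
  have hnS0 : ((((S17.Gf M N j + S17.Gf M N (j+1)) * 2 ^ K : ℕ)) : ENNReal) ≠ 0 := by
    have h1 := S17.Gf_pos M N j
    have h2 : 0 < 2 ^ K := Nat.pow_pos (by norm_num)
    simp only [ne_eq, Nat.cast_eq_zero]
    positivity
  have hnStop : ((((S17.Gf M N j + S17.Gf M N (j+1)) * 2 ^ K : ℕ)) : ENNReal) ≠ ⊤ :=
    ENNReal.natCast_ne_top _
  rw [ProbabilityTheory.cond_apply ((Set.toFinite _).measurableSet), hSTset, hSset,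
    S17.unif_coe, S17.unif_coe, hc1, hcT]
  have hstep : ((((S17.Gf M N j + S17.Gf M N (j+1)) * 2 ^ K : ℕ) : ENNReal) /
        (Fintype.card (Omega K) : ENNReal))⁻¹ *
      ((((M j * S17.Gf M N (j+1)) * 2 ^ K : ℕ) : ENNReal) /
        (Fintype.card (Omega K) : ENNReal))
      = (((M j * S17.Gf M N (j+1)) * 2 ^ K : ℕ) : ENNReal) /
        (((S17.Gf M N j + S17.Gf M N (j+1)) * 2 ^ K : ℕ) : ENNReal) := by
    rw [ENNReal.inv_div (Or.inl hDtop) (Or.inl hD0)]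
    rw [ENNReal.div_eq_inv_mul, ENNReal.div_eq_inv_mul, ENNReal.div_eq_inv_mul]
    calc (((S17.Gf M N j + S17.Gf M N (j+1)) * 2 ^ K : ℕ) : ENNReal)⁻¹ *
          (Fintype.card (Omega K) : ENNReal) *
          ((Fintype.card (Omega K) : ENNReal)⁻¹ *
            (((M j * S17.Gf M N (j+1)) * 2 ^ K : ℕ) : ENNReal))
        = ((Fintype.card (Omega K) : ENNReal) * (Fintype.card (Omega K) : ENNReal)⁻¹) *
          ((((S17.Gf M N j + S17.Gf M N (j+1)) * 2 ^ K : ℕ) : ENNReal)⁻¹ *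
            (((M j * S17.Gf M N (j+1)) * 2 ^ K : ℕ) : ENNReal)) := by
          ring
      _ = (((S17.Gf M N j + S17.Gf M N (j+1)) * 2 ^ K : ℕ) : ENNReal)⁻¹ *
            (((M j * S17.Gf M N (j+1)) * 2 ^ K : ℕ) : ENNReal) := by
          rw [ENNReal.mul_inv_cancel hD0 hDtop, one_mul]
  rw [hstep]
  -- cancel the factor 2^K
  have hcast1 : (((M j * S17.Gf M N (j+1)) * 2 ^ K : ℕ) : ENNReal)
      = ((M j * S17.Gf M N (j+1) : ℕ) : ENNReal) * (2 : ENNReal) ^ K := by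
    push_cast
    ring
  have hcast2 : (((S17.Gf M N j + S17.Gf M N (j+1)) * 2 ^ K : ℕ) : ENNReal)
      = ((S17.Gf M N j + S17.Gf M N (j+1) : ℕ) : ENNReal) * (2 : ENNReal) ^ K := by
    push_cast
    ring
  rw [hcast1, hcast2,
    ENNReal.mul_div_mul_right _ _ (by positivity) (by
      exact ENNReal.pow_ne_top ENNReal.ofNat_ne_top)]
  -- now the real computation
  rw [S17.xcf_eq M N (j+1) hj1N]
  have hG1pos : (0:ℝ) < S17.Gf M N (j+1) := by exact_mod_cast S17.Gf_pos M N (j+1)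
  have hG2pos : (0:ℝ) < S17.Gf M N (j+2) := by exact_mod_cast S17.Gf_pos M N (j+2)
  have hGj : S17.Gf M N j = M j * S17.Gf M N (j+1) + S17.Gf M N (j+2) := S17.Gf_of_lt hjN
  have hreal : (M j : ℝ) / ((M j : ℝ) + 1 + (S17.Gf M N (j+2) : ℝ) / (S17.Gf M N (j+1) : ℝ))
      = ((M j * S17.Gf M N (j+1) : ℕ) : ℝ) / ((S17.Gf M N j + S17.Gf M N (j+1) : ℕ) : ℝ) := by
    have hden1 : (0:ℝ) < (M j : ℝ) + 1 + (S17.Gf M N (j+2) : ℝ) / (S17.Gf M N (j+1) : ℝ) := by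
      have h3 : (0:ℝ) < (S17.Gf M N (j+2) : ℝ) / (S17.Gf M N (j+1) : ℝ) := div_pos hG2pos hG1pos
      have h4 : (0:ℝ) ≤ (M j : ℝ) := Nat.cast_nonneg _
      linarith
    have hden2 : (0:ℝ) < ((S17.Gf M N j + S17.Gf M N (j+1) : ℕ) : ℝ) := by
      have := S17.Gf_pos M N j
      have h5 : 0 < S17.Gf M N j + S17.Gf M N (j+1) := by omega
      exact_mod_cast h5
    rw [div_eq_div_iff (ne_of_gt hden1) (ne_of_gt hden2)]
    rw [hGj]
    push_cast
    field_simp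
    ring
  rw [hreal]
  have hden2 : (0:ℝ) < ((S17.Gf M N j + S17.Gf M N (j+1) : ℕ) : ℝ) := by
    have := S17.Gf_pos M N j
    have h5 : 0 < S17.Gf M N j + S17.Gf M N (j+1) := by omega
    exact_mod_cast h5
  rw [ENNReal.ofReal_div_of_pos hden2, ENNReal.ofReal_natCast, ENNReal.ofReal_natCast]
end
end
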